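/- arXiv:1704.01862 — 4 statements merged into one kernel-verified Lean document; each statement's English description precedes it below -/
import Mathlib

section
/- Let A ⊆ ℝ^d be a finite nonempty set and let c be drawn uniformly at random from A. Then E[Φ({c},A)] ≤ 2·Δ₁(A); equivalently, (1/|A|)·Σ_{c∈A} Σ_{x∈A} ‖x−c‖² ≤ 2·Σ_{x∈A} ‖x−μ(A)‖². -/
open Finset
open scoped BigOperators
open Classical

noncomputable section

/-- Points of `ℝ^d`. -/
abbrev Pt (d : ℕ) := EuclideanSpace ℝ (Fin d)

/-- `Φ(C, X) = Σ_{x ∈ X} min_{c ∈ C} ‖x - c‖²`. -/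
noncomputable def Phi {d : ℕ} (C X : Finset (Pt d)) : ℝ :=
  ∑ x ∈ X, sInf ((fun c => ‖x - c‖ ^ 2) '' (C : Set (Pt d)))

/-- The centroid `μ(X)` of a finite set of points. -/
noncomputable def ctr {d : ℕ} (X : Finset (Pt d)) : Pt d :=
  (X.card : ℝ)⁻¹ • ∑ x ∈ X, x

/-- `Δ₁(X) = Φ({μ(X)}, X)`. -/
noncomputable def Delta1 {d : ℕ} (X : Finset (Pt d)) : ℝ := Phi {ctr X} X

/-- `Δ_k(X)`: the optimal `k`-means cost of `X`. -/
noncomputable def DeltaK {d : ℕ} (k : ℕ) (X : Finset (Pt d)) : ℝ :=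
  sInf ((fun C => Phi C X) '' {C : Finset (Pt d) | C.card = k})

/-- `X₁, …, X_k` is an optimal `k`-means partition of `X`. -/
def IsOptPartition {d : ℕ} (k : ℕ) (X : Finset (Pt d)) (Xs : Fin k → Finset (Pt d)) : Prop :=
  (∀ j, (Xs j).Nonempty) ∧
  (∀ j l, j ≠ l → Disjoint (Xs j) (Xs l)) ∧
  Finset.univ.biUnion Xs = X ∧
  ∑ j, Delta1 (Xs j) = DeltaK k X

/-- `X` is `(k, ε)`-irreducible: `Δ_{k-1}(X) ≥ (1+ε)·Δ_k(X)`. -/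
def KIrreducible {d : ℕ} (k : ℕ) (ε : ℝ) (X : Finset (Pt d)) : Prop :=
  (1 + ε) * DeltaK k X ≤ DeltaK (k - 1) X

/-- The invariant `P(i)`: `Ci` consists of the centers `c r` for `r < i` (clusters reindexed
so that the covered clusters come first), each `c r` is a `(1 + ε/16)`-good center for the
optimal cluster `Xs r`, and `Φ(Ci, X) > 0`. -/
def InvariantP {d k : ℕ} (ε : ℝ) (X : Finset (Pt d)) (Xs : Fin k → Finset (Pt d))
    (i : ℕ) (c : Fin k → Pt d) (Ci : Finset (Pt d)) : Prop :=
  Ci = Finset.image c (Finset.univ.filter (fun r : Fin k => r.val < i)) ∧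
  (∀ r : Fin k, r.val < i → Phi {c r} (Xs r) ≤ (1 + ε / 16) * Delta1 (Xs r)) ∧
  0 < Phi Ci X

lemma sum_sub_ctr {d : ℕ} (A : Finset (Pt d)) (hA : A.Nonempty) :
    ∑ x ∈ A, (x - ctr A) = 0 := by
  have hc : (A.card : ℝ) ≠ 0 := by
    exact_mod_cast Finset.card_ne_zero_of_mem hA.choose_spec
  simp only [Finset.sum_sub_distrib, Finset.sum_const, ctr,
    ← Nat.cast_smul_eq_nsmul ℝ, smul_inv_smul₀ hc]
  abel

lemma bias_var {d : ℕ} (A : Finset (Pt d)) (hA : A.Nonempty) (c : Pt d) :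
    ∑ x ∈ A, ‖x - c‖ ^ 2 =
      ∑ x ∈ A, ‖x - ctr A‖ ^ 2 + (A.card : ℝ) * ‖ctr A - c‖ ^ 2 := by
  have key : ∑ x ∈ A, ‖x - c‖ ^ 2 =
      ∑ x ∈ A, (‖x - ctr A‖ ^ 2 + 2 * (inner ℝ (x - ctr A) (ctr A - c) : ℝ)
        + ‖ctr A - c‖ ^ 2) := by
    refine Finset.sum_congr rfl fun x _ => ?_
    have hx : x - c = (x - ctr A) + (ctr A - c) := by abel
    rw [hx, @norm_add_sq_real]
  rw [key]
  rw [Finset.sum_add_distrib, Finset.sum_add_distrib, ← Finset.mul_sum,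
    ← sum_inner, sum_sub_ctr A hA]
  simp [mul_comm]

/-- If `c` is drawn uniformly at random from a finite nonempty `A ⊆ ℝ^d`,
then `E[Φ({c}, A)] ≤ 2·Δ₁(A)`; i.e.
`(1/|A|)·Σ_{c∈A} Σ_{x∈A} ‖x−c‖² ≤ 2·Σ_{x∈A} ‖x−μ(A)‖²`. -/
theorem stmt_1 {d : ℕ} (A : Finset (Pt d)) (hA : A.Nonempty) :
    (A.card : ℝ)⁻¹ * ∑ c ∈ A, ∑ x ∈ A, ‖x - c‖ ^ 2 ≤
      2 * ∑ x ∈ A, ‖x - ctr A‖ ^ 2 := by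
  have hc : (0:ℝ) < (A.card : ℝ) := by exact_mod_cast Finset.card_pos.mpr hA
  have key : ∑ c ∈ A, ∑ x ∈ A, ‖x - c‖ ^ 2 =
      (A.card : ℝ) * (2 * ∑ x ∈ A, ‖x - ctr A‖ ^ 2) := by
    have : ∀ c ∈ A, ∑ x ∈ A, ‖x - c‖ ^ 2 =
        ∑ x ∈ A, ‖x - ctr A‖ ^ 2 + (A.card : ℝ) * ‖ctr A - c‖ ^ 2 :=
      fun c _ => bias_var A hA c
    rw [Finset.sum_congr rfl this, Finset.sum_add_distrib, Finset.sum_const,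
      ← Finset.mul_sum]
    have h2 : ∑ c ∈ A, ‖ctr A - c‖ ^ 2 = ∑ x ∈ A, ‖x - ctr A‖ ^ 2 := by
      refine Finset.sum_congr rfl fun c _ => ?_
      rw [← norm_neg]; congr 1; abel
    rw [h2, nsmul_eq_mul]
    ring
  rw [key, inv_mul_cancel_left₀ (ne_of_gt hc)]
end
end

section
/- Let X ⊆ ℝ^d be a finite set of n points and k > 1 a positive integer. Run Query-k-means++: pick c uniformly at random from X, set C = {c}, and then perform k−1 outer iterations of Query-k-means++; let C denote the final (random) center set. Then E[Φ(C,X)] ≤ 24·Δ_k(X). -/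
open Finset
open scoped BigOperators
open Classical

noncomputable section

/-- `x` belongs to an optimal cluster that contains no point of `C` ("uncovered"). -/
def Uncov {d k : ℕ} (Xs : Fin k → Finset (Pt d)) (C : Finset (Pt d)) (x : Pt d) : Prop :=
  ∃ j, x ∈ Xs j ∧ ∀ c ∈ C, c ∉ Xs j

/-- Transition probability of the inner loop of one outer iteration of `Query-k-means++`,
with `r` tries remaining: repeatedly `D²`-sample `x` from `X` w.r.t. `C`; if the optimal
cluster of `x` is uncovered, add `x` to `C` and stop; after `r` failed tries, keep `C`. -/
noncomputable def tryK {d k : ℕ} (X : Finset (Pt d)) (Xs : Fin k → Finset (Pt d)) :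
    ℕ → Finset (Pt d) → Finset (Pt d) → ℝ
  | 0, C, C' => if C' = C then 1 else 0
  | r + 1, C, C' =>
    ∑ x ∈ X, (Phi C {x} / Phi C X) *
      (if Uncov Xs C x then (if C' = insert x C then 1 else 0) else tryK X Xs r C C')

/-- Transition probability of one outer iteration of `Query-k-means++` (at most
`⌈log₂ k⌉` tries); if `Φ(C, X) = 0` the iteration leaves `C` unchanged. -/
noncomputable def iterK {d k : ℕ} (X : Finset (Pt d)) (Xs : Fin k → Finset (Pt d))
    (C C' : Finset (Pt d)) : ℝ :=
  if Phi C X = 0 then (if C' = C then 1 else 0) else tryK X Xs (Nat.clog 2 k) C C'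

/-- Transition probability of `t` outer iterations of `Query-k-means++`. -/
noncomputable def stepsK {d k : ℕ} (X : Finset (Pt d)) (Xs : Fin k → Finset (Pt d)) :
    ℕ → Finset (Pt d) → Finset (Pt d) → ℝ
  | 0, C, C' => if C' = C then 1 else 0
  | t + 1, C, C' => ∑ D ∈ (X ∪ C).powerset, iterK X Xs C D * stepsK X Xs t D C'

namespace KMXQ

variable {d : ℕ}

/-- pointwise cost -/
noncomputable def phi (C : Finset (Pt d)) (x : Pt d) : ℝ :=
  sInf ((fun c => ‖x - c‖ ^ 2) '' (C : Set (Pt d)))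

lemma Phi_eq (C Y : Finset (Pt d)) : Phi C Y = ∑ x ∈ Y, phi C x := rfl

lemma Phi_singleton (C : Finset (Pt d)) (x : Pt d) : Phi C {x} = phi C x := by
  simp [Phi_eq]

lemma phi_nonneg (C : Finset (Pt d)) (x : Pt d) : 0 ≤ phi C x := by
  apply Real.sInf_nonneg
  rintro y ⟨c, -, rfl⟩
  positivity

lemma phi_bddBelow (C : Finset (Pt d)) (x : Pt d) :
    BddBelow ((fun c => ‖x - c‖ ^ 2) '' (C : Set (Pt d))) := by
  refine ⟨0, ?_⟩
  rintro y ⟨c, -, rfl⟩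
  positivity

lemma phi_le (C : Finset (Pt d)) {c : Pt d} (hc : c ∈ C) (x : Pt d) :
    phi C x ≤ ‖x - c‖ ^ 2 :=
  csInf_le (phi_bddBelow C x) ⟨c, by exact_mod_cast hc, rfl⟩

lemma phi_exists_min {C : Finset (Pt d)} (hC : C.Nonempty) (x : Pt d) :
    ∃ c ∈ C, phi C x = ‖x - c‖ ^ 2 := by
  obtain ⟨c, hc, hmin⟩ := C.exists_min_image (fun c => ‖x - c‖ ^ 2) hC
  refine ⟨c, hc, le_antisymm (phi_le C hc x) ?_⟩
  apply le_csInf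
  · exact ⟨_, ⟨c, by exact_mod_cast hc, rfl⟩⟩
  · rintro y ⟨c', hc', rfl⟩
    exact hmin c' (by exact_mod_cast hc')

lemma phi_mono {C C' : Finset (Pt d)} (h : C ⊆ C') (hC : C.Nonempty) (x : Pt d) :
    phi C' x ≤ phi C x := by
  obtain ⟨c, hc, hce⟩ := phi_exists_min hC x
  rw [hce]
  exact phi_le C' (h hc) x

lemma phi_insert_le_left (C : Finset (Pt d)) (hC : C.Nonempty) (y x : Pt d) :
    phi (insert x C) y ≤ phi C y := phi_mono (Finset.subset_insert x C) hC y

lemma phi_insert_le_right (C : Finset (Pt d)) (y x : Pt d) :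
    phi (insert x C) y ≤ ‖y - x‖ ^ 2 := phi_le _ (Finset.mem_insert_self x C) y

lemma Phi_nonneg (C Y : Finset (Pt d)) : 0 ≤ Phi C Y := by
  rw [Phi_eq]; exact Finset.sum_nonneg fun x _ => phi_nonneg C x

lemma Phi_mono {C C' : Finset (Pt d)} (h : C ⊆ C') (hC : C.Nonempty) (Y : Finset (Pt d)) :
    Phi C' Y ≤ Phi C Y := by
  rw [Phi_eq, Phi_eq]
  exact Finset.sum_le_sum fun x _ => phi_mono h hC x

lemma phi_single (c : Pt d) (x : Pt d) : phi {c} x = ‖x - c‖ ^ 2 := by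
  simp [phi]

lemma Phi_single (c : Pt d) (Y : Finset (Pt d)) : Phi {c} Y = ∑ y ∈ Y, ‖y - c‖ ^ 2 := by
  rw [Phi_eq]; exact Finset.sum_congr rfl fun y _ => phi_single c y

lemma sum_sub_ctr {A : Finset (Pt d)} (hA : A.Nonempty) :
    ∑ y ∈ A, (y - ctr A) = 0 := by
  have hcard : (A.card : ℝ) ≠ 0 := by
    exact_mod_cast Finset.card_ne_zero_of_mem hA.choose_spec
  rw [Finset.sum_sub_distrib, Finset.sum_const, ctr, ← Nat.cast_smul_eq_nsmul ℝ, smul_smul]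
  rw [mul_inv_cancel₀ hcard, one_smul, sub_self]

lemma cost_decomp {A : Finset (Pt d)} (hA : A.Nonempty) (c : Pt d) :
    ∑ y ∈ A, ‖y - c‖ ^ 2 = Delta1 A + (A.card : ℝ) * ‖c - ctr A‖ ^ 2 := by
  have key : ∀ y : Pt d, ‖y - c‖ ^ 2
      = ‖y - ctr A‖ ^ 2 + 2 * (inner ℝ (y - ctr A) (ctr A - c) : ℝ) + ‖ctr A - c‖ ^ 2 := by
    intro y
    have : y - c = (y - ctr A) + (ctr A - c) := by abel
    rw [this, norm_add_sq_real]
  calc ∑ y ∈ A, ‖y - c‖ ^ 2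
      = ∑ y ∈ A, (‖y - ctr A‖ ^ 2 + 2 * (inner ℝ (y - ctr A) (ctr A - c) : ℝ)
          + ‖ctr A - c‖ ^ 2) := Finset.sum_congr rfl fun y _ => key y
    _ = (∑ y ∈ A, ‖y - ctr A‖ ^ 2) + 2 * (inner ℝ (∑ y ∈ A, (y - ctr A)) (ctr A - c) : ℝ)
          + (A.card : ℝ) * ‖ctr A - c‖ ^ 2 := by
        rw [Finset.sum_add_distrib, Finset.sum_add_distrib, Finset.sum_const, nsmul_eq_mul]
        congr 1
        congr 1
        rw [← Finset.mul_sum, sum_inner]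
    _ = Delta1 A + (A.card : ℝ) * ‖c - ctr A‖ ^ 2 := by
        rw [sum_sub_ctr hA, inner_zero_left, Delta1, Phi_single, norm_sub_rev]
        ring

lemma Delta1_nonneg (A : Finset (Pt d)) : 0 ≤ Delta1 A := Phi_nonneg _ _

lemma sum_Phi_single {A : Finset (Pt d)} (hA : A.Nonempty) :
    ∑ c ∈ A, Phi {c} A = 2 * (A.card : ℝ) * Delta1 A := by
  have h1 : ∀ c ∈ A, Phi {c} A = Delta1 A + (A.card : ℝ) * ‖c - ctr A‖ ^ 2 := by
    intro c _
    rw [Phi_single]; exact cost_decomp hA c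
  rw [Finset.sum_congr rfl h1, Finset.sum_add_distrib, Finset.sum_const, nsmul_eq_mul,
    ← Finset.mul_sum]
  have h2 : ∑ c ∈ A, ‖c - ctr A‖ ^ 2 = Delta1 A := by
    rw [Delta1, Phi_single]
  rw [h2]; ring

lemma sum_pairs {A : Finset (Pt d)} (hA : A.Nonempty) :
    ∑ x ∈ A, ∑ y ∈ A, ‖x - y‖ ^ 2 = 2 * (A.card : ℝ) * Delta1 A := by
  rw [← sum_Phi_single hA]
  refine Finset.sum_congr rfl fun x _ => ?_
  rw [Phi_single]
  exact Finset.sum_congr rfl fun y _ => by rw [norm_sub_rev]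


lemma phi_le_two (C : Finset (Pt d)) (hC : C.Nonempty) (x y : Pt d) :
    phi C x ≤ 2 * ‖x - y‖ ^ 2 + 2 * phi C y := by
  obtain ⟨c, hc, hce⟩ := phi_exists_min hC y
  have h1 : phi C x ≤ ‖x - c‖ ^ 2 := phi_le C hc x
  have h2 : ‖x - c‖ ≤ ‖x - y‖ + ‖y - c‖ := by
    have : x - c = (x - y) + (y - c) := by abel
    rw [this]; exact norm_add_le _ _
  have h2' : ‖x - c‖ ^ 2 ≤ (‖x - y‖ + ‖y - c‖) ^ 2 :=
    pow_le_pow_left₀ (norm_nonneg _) h2 2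
  have h3 : ‖x - c‖ ^ 2 ≤ 2 * ‖x - y‖ ^ 2 + 2 * ‖y - c‖ ^ 2 := by
    nlinarith [sq_nonneg (‖x - y‖ - ‖y - c‖)]
  rw [hce]; linarith

lemma phi_avg_bound {A : Finset (Pt d)} (hA : A.Nonempty) (C : Finset (Pt d))
    (hC : C.Nonempty) (x : Pt d) :
    (A.card : ℝ) * phi C x ≤ ∑ y ∈ A, (2 * ‖x - y‖ ^ 2 + 2 * phi C y) := by
  have : (A.card : ℝ) * phi C x = ∑ _y ∈ A, phi C x := by
    rw [Finset.sum_const, nsmul_eq_mul]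
  rw [this]
  exact Finset.sum_le_sum fun y _ => phi_le_two C hC x y

/-- The Arthur–Vassilvitskii `D²`-sampling lemma. -/
lemma av_lemma {A : Finset (Pt d)} (hA : A.Nonempty) {C : Finset (Pt d)} (hC : C.Nonempty) :
    ∑ x ∈ A, phi C x * Phi (insert x C) A ≤ 8 * Delta1 A * Phi C A := by
  have hcard : (0 : ℝ) < A.card := by exact_mod_cast Finset.card_pos.mpr hA
  have key : ∀ x ∈ A, (A.card : ℝ) * (phi C x * Phi (insert x C) A)
      ≤ (∑ y ∈ A, 2 * ‖x - y‖ ^ 2) * Phi C A + (2 * Phi C A) * ∑ y ∈ A, ‖y - x‖ ^ 2 := by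
    intro x _
    have h1 : (A.card : ℝ) * phi C x
        ≤ ∑ y ∈ A, 2 * ‖x - y‖ ^ 2 + 2 * Phi C A := by
      have := phi_avg_bound hA C hC x
      rw [Finset.sum_add_distrib] at this
      rw [Phi_eq]
      calc (A.card : ℝ) * phi C x ≤ _ := this
        _ = ∑ y ∈ A, 2 * ‖x - y‖ ^ 2 + 2 * ∑ y ∈ A, phi C y := by
            rw [Finset.mul_sum]
    have h2 : Phi (insert x C) A ≤ Phi C A := Phi_mono (Finset.subset_insert x C) hC A
    have h3 : Phi (insert x C) A ≤ ∑ y ∈ A, ‖y - x‖ ^ 2 := by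
      rw [Phi_eq]
      exact Finset.sum_le_sum fun y _ => phi_insert_le_right C y x
    have h4 : 0 ≤ Phi (insert x C) A := Phi_nonneg _ _
    have h5 : 0 ≤ ∑ y ∈ A, 2 * ‖x - y‖ ^ 2 :=
      Finset.sum_nonneg fun y _ => by positivity
    have h6 : 0 ≤ Phi C A := Phi_nonneg _ _
    calc (A.card : ℝ) * (phi C x * Phi (insert x C) A)
        = ((A.card : ℝ) * phi C x) * Phi (insert x C) A := by ring
      _ ≤ (∑ y ∈ A, 2 * ‖x - y‖ ^ 2 + 2 * Phi C A) * Phi (insert x C) A := by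
          apply mul_le_mul_of_nonneg_right h1 h4
      _ = (∑ y ∈ A, 2 * ‖x - y‖ ^ 2) * Phi (insert x C) A
          + (2 * Phi C A) * Phi (insert x C) A := by ring
      _ ≤ (∑ y ∈ A, 2 * ‖x - y‖ ^ 2) * Phi C A + (2 * Phi C A) * ∑ y ∈ A, ‖y - x‖ ^ 2 := by
          apply add_le_add
          · exact mul_le_mul_of_nonneg_left h2 h5
          · exact mul_le_mul_of_nonneg_left h3 (by positivity)
  have hsum : (A.card : ℝ) * ∑ x ∈ A, phi C x * Phi (insert x C) A
      ≤ (∑ x ∈ A, ∑ y ∈ A, 2 * ‖x - y‖ ^ 2) * Phi C A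
        + (2 * Phi C A) * ∑ x ∈ A, ∑ y ∈ A, ‖y - x‖ ^ 2 := by
    rw [Finset.mul_sum]
    calc ∑ x ∈ A, (A.card : ℝ) * (phi C x * Phi (insert x C) A)
        ≤ ∑ x ∈ A, ((∑ y ∈ A, 2 * ‖x - y‖ ^ 2) * Phi C A
            + (2 * Phi C A) * ∑ y ∈ A, ‖y - x‖ ^ 2) := Finset.sum_le_sum key
      _ = _ := by rw [Finset.sum_add_distrib, ← Finset.sum_mul, ← Finset.mul_sum]
  have e1 : ∑ x ∈ A, ∑ y ∈ A, 2 * ‖x - y‖ ^ 2 = 2 * (2 * (A.card : ℝ) * Delta1 A) := by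
    rw [← sum_pairs hA, Finset.mul_sum]
    exact Finset.sum_congr rfl fun x _ => by rw [Finset.mul_sum]
  have e2 : ∑ x ∈ A, ∑ y ∈ A, ‖y - x‖ ^ 2 = 2 * (A.card : ℝ) * Delta1 A := by
    rw [← sum_pairs hA]
    exact Finset.sum_congr rfl fun x _ =>
      Finset.sum_congr rfl fun y _ => by rw [norm_sub_rev]
  rw [e1, e2] at hsum
  have : (A.card : ℝ) * ∑ x ∈ A, phi C x * Phi (insert x C) A
      ≤ (A.card : ℝ) * (8 * Delta1 A * Phi C A) := by
    calc (A.card : ℝ) * ∑ x ∈ A, phi C x * Phi (insert x C) A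
        ≤ _ := hsum
      _ = (A.card : ℝ) * (8 * Delta1 A * Phi C A) := by ring
  exact le_of_mul_le_mul_left this hcard

section Chain

variable {d k : ℕ} (X : Finset (Pt d)) (Xs : Fin k → Finset (Pt d))

lemma tryK_nonneg (r : ℕ) (C D : Finset (Pt d)) : 0 ≤ tryK X Xs r C D := by
  induction r generalizing C D with
  | zero => simp only [tryK]; split <;> norm_num
  | succ r ih =>
    simp only [tryK]
    refine Finset.sum_nonneg fun x _ => ?_
    refine mul_nonneg (div_nonneg (Phi_nonneg _ _) (Phi_nonneg _ _)) ?_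
    split
    · split <;> norm_num
    · exact ih C D

lemma iterK_nonneg (C D : Finset (Pt d)) : 0 ≤ iterK X Xs C D := by
  unfold iterK
  split
  · split <;> norm_num
  · exact tryK_nonneg X Xs _ C D

lemma stepsK_nonneg (t : ℕ) (C D : Finset (Pt d)) : 0 ≤ stepsK X Xs t C D := by
  induction t generalizing C D with
  | zero => simp only [stepsK]; split <;> norm_num
  | succ t ih =>
    simp only [stepsK]
    exact Finset.sum_nonneg fun D' _ => mul_nonneg (iterK_nonneg X Xs C D') (ih D' D)

lemma tryK_support {r : ℕ} {C D : Finset (Pt d)} (h : tryK X Xs r C D ≠ 0) :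
    C ⊆ D ∧ D ⊆ X ∪ C := by
  induction r generalizing D with
  | zero =>
    simp only [tryK] at h
    have : D = C := by by_contra hne; simp [hne] at h
    subst this
    exact ⟨Finset.Subset.refl _, Finset.subset_union_right⟩
  | succ r ih =>
    simp only [tryK] at h
    obtain ⟨x, hx, hterm⟩ := Finset.exists_ne_zero_of_sum_ne_zero h
    have h2 := right_ne_zero_of_mul hterm
    by_cases hu : Uncov Xs C x
    · rw [if_pos hu] at h2
      have : D = insert x C := by by_contra hne; simp [hne] at h2
      subst this
      exact ⟨Finset.subset_insert x C,
        Finset.insert_subset (Finset.mem_union_left C hx) Finset.subset_union_right⟩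
    · rw [if_neg hu] at h2
      exact ih h2

lemma iterK_support {C D : Finset (Pt d)} (h : iterK X Xs C D ≠ 0) :
    C ⊆ D ∧ D ⊆ X ∪ C := by
  unfold iterK at h
  split at h
  · have : D = C := by by_contra hne; simp [hne] at h
    subst this
    exact ⟨Finset.Subset.refl _, Finset.subset_union_right⟩
  · exact tryK_support X Xs h

lemma stepsK_support {t : ℕ} {C D : Finset (Pt d)} (h : stepsK X Xs t C D ≠ 0) :
    C ⊆ D ∧ D ⊆ X ∪ C := by
  induction t generalizing C D with
  | zero =>
    simp only [stepsK] at h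
    have : D = C := by by_contra hne; simp [hne] at h
    subst this
    exact ⟨Finset.Subset.refl _, Finset.subset_union_right⟩
  | succ t ih =>
    simp only [stepsK] at h
    obtain ⟨D', _, hterm⟩ := Finset.exists_ne_zero_of_sum_ne_zero h
    obtain ⟨h1, h2⟩ := iterK_support X Xs (left_ne_zero_of_mul hterm)
    obtain ⟨h3, h4⟩ := ih (right_ne_zero_of_mul hterm)
    exact ⟨h1.trans h3,
      h4.trans (Finset.union_subset Finset.subset_union_left h2)⟩

lemma union_stable {C D : Finset (Pt d)} (h1 : C ⊆ D) (h2 : D ⊆ X ∪ C) :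
    X ∪ D = X ∪ C :=
  subset_antisymm (Finset.union_subset Finset.subset_union_left h2)
    (Finset.union_subset_union_right h1)

lemma Phi_sum_singleton (C : Finset (Pt d)) : ∑ x ∈ X, Phi C {x} = Phi C X := by
  rw [Phi_eq]
  exact Finset.sum_congr rfl fun x _ => Phi_singleton C x

lemma tryK_mass {C : Finset (Pt d)} (hΦ : Phi C X ≠ 0) (r : ℕ) :
    ∑ D ∈ (X ∪ C).powerset, tryK X Xs r C D = 1 := by
  induction r with
  | zero =>
    simp only [tryK]
    rw [Finset.sum_ite_eq' (X ∪ C).powerset C (fun _ => (1 : ℝ)),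
      if_pos (Finset.mem_powerset.mpr Finset.subset_union_right)]
  | succ r ih =>
    simp only [tryK]
    rw [Finset.sum_comm]
    have hx1 : ∀ x ∈ X, (Phi C {x} / Phi C X) *
        (if Uncov Xs C x then (1:ℝ) else 1) = Phi C {x} / Phi C X := by
      intro x _; simp
    calc ∑ x ∈ X, ∑ D ∈ (X ∪ C).powerset, (Phi C {x} / Phi C X) *
          (if Uncov Xs C x then (if D = insert x C then (1:ℝ) else 0) else tryK X Xs r C D)
        = ∑ x ∈ X, Phi C {x} / Phi C X := by
          refine Finset.sum_congr rfl fun x hx => ?_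
          rw [← Finset.mul_sum]
          by_cases hu : Uncov Xs C x
          · simp only [if_pos hu]
            rw [Finset.sum_ite_eq' (X ∪ C).powerset (insert x C) (fun _ => (1 : ℝ))]
            have : insert x C ∈ (X ∪ C).powerset := by
              rw [Finset.mem_powerset]
              exact Finset.insert_subset (Finset.mem_union_left C hx)
                Finset.subset_union_right
            rw [if_pos this, mul_one]
          · simp only [if_neg hu]
            rw [ih, mul_one]
      _ = 1 := by rw [← Finset.sum_div, Phi_sum_singleton, div_self hΦ]

lemma iterK_mass (C : Finset (Pt d)) :
    ∑ D ∈ (X ∪ C).powerset, iterK X Xs C D = 1 := by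
  unfold iterK
  by_cases h : Phi C X = 0
  · simp only [if_pos h]
    rw [Finset.sum_ite_eq' (X ∪ C).powerset C (fun _ => (1 : ℝ)),
      if_pos (Finset.mem_powerset.mpr Finset.subset_union_right)]
  · simp only [if_neg h]
    exact tryK_mass X Xs h _

lemma stepsK_mass (t : ℕ) (C : Finset (Pt d)) :
    ∑ C' ∈ (X ∪ C).powerset, stepsK X Xs t C C' = 1 := by
  induction t generalizing C with
  | zero =>
    simp only [stepsK]
    rw [Finset.sum_ite_eq' (X ∪ C).powerset C (fun _ => (1 : ℝ)),
      if_pos (Finset.mem_powerset.mpr Finset.subset_union_right)]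
  | succ t ih =>
    simp only [stepsK]
    rw [Finset.sum_comm]
    calc ∑ D ∈ (X ∪ C).powerset, ∑ C' ∈ (X ∪ C).powerset, iterK X Xs C D * stepsK X Xs t D C'
        = ∑ D ∈ (X ∪ C).powerset, iterK X Xs C D := by
          refine Finset.sum_congr rfl fun D _ => ?_
          rw [← Finset.mul_sum]
          by_cases hz : iterK X Xs C D = 0
          · rw [hz, zero_mul]
          · obtain ⟨h1, h2⟩ := iterK_support X Xs hz
            rw [← union_stable X h1 h2, ih D, mul_one]
      _ = 1 := iterK_mass X Xs C

/-- Expected final cost after `t` iterations from `C`. -/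
noncomputable def EF (t : ℕ) (C : Finset (Pt d)) : ℝ :=
  ∑ C' ∈ (X ∪ C).powerset, stepsK X Xs t C C' * Phi C' X

lemma EF_zero (C : Finset (Pt d)) : EF X Xs 0 C = Phi C X := by
  unfold EF
  simp only [stepsK, ite_mul, one_mul, zero_mul]
  rw [Finset.sum_ite_eq' (X ∪ C).powerset C (fun C' => Phi C' X),
    if_pos (Finset.mem_powerset.mpr Finset.subset_union_right)]

lemma EF_nonneg (t : ℕ) (C : Finset (Pt d)) : 0 ≤ EF X Xs t C :=
  Finset.sum_nonneg fun C' _ => mul_nonneg (stepsK_nonneg X Xs t C C') (Phi_nonneg _ _)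

lemma EF_le_Phi (t : ℕ) {C : Finset (Pt d)} (hC : C.Nonempty) : EF X Xs t C ≤ Phi C X := by
  have step : ∀ C' ∈ (X ∪ C).powerset,
      stepsK X Xs t C C' * Phi C' X ≤ stepsK X Xs t C C' * Phi C X := by
    intro C' _
    by_cases hz : stepsK X Xs t C C' = 0
    · rw [hz, zero_mul, zero_mul]
    · exact mul_le_mul_of_nonneg_left (Phi_mono (stepsK_support X Xs hz).1 hC X)
        (stepsK_nonneg X Xs t C C')
  calc EF X Xs t C ≤ ∑ C' ∈ (X ∪ C).powerset, stepsK X Xs t C C' * Phi C X :=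
        Finset.sum_le_sum step
    _ = (∑ C' ∈ (X ∪ C).powerset, stepsK X Xs t C C') * Phi C X := by
        rw [Finset.sum_mul]
    _ = Phi C X := by rw [stepsK_mass, one_mul]

lemma EF_succ (t : ℕ) (C : Finset (Pt d)) :
    EF X Xs (t + 1) C = ∑ D ∈ (X ∪ C).powerset, iterK X Xs C D * EF X Xs t D := by
  unfold EF
  simp only [stepsK]
  calc ∑ C' ∈ (X ∪ C).powerset,
        (∑ D ∈ (X ∪ C).powerset, iterK X Xs C D * stepsK X Xs t D C') * Phi C' X
      = ∑ C' ∈ (X ∪ C).powerset, ∑ D ∈ (X ∪ C).powerset,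
          iterK X Xs C D * (stepsK X Xs t D C' * Phi C' X) := by
        refine Finset.sum_congr rfl fun C' _ => ?_
        rw [Finset.sum_mul]
        exact Finset.sum_congr rfl fun D _ => by ring
    _ = ∑ D ∈ (X ∪ C).powerset, ∑ C' ∈ (X ∪ C).powerset,
          iterK X Xs C D * (stepsK X Xs t D C' * Phi C' X) := Finset.sum_comm
    _ = ∑ D ∈ (X ∪ C).powerset, iterK X Xs C D *
          ∑ C' ∈ (X ∪ D).powerset, stepsK X Xs t D C' * Phi C' X := by
        refine Finset.sum_congr rfl fun D _ => ?_
        rw [← Finset.mul_sum]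
        by_cases hz : iterK X Xs C D = 0
        · rw [hz, zero_mul, zero_mul]
        · obtain ⟨h1, h2⟩ := iterK_support X Xs hz
          rw [union_stable X h1 h2]

end Chain

section Clusters

variable {d k : ℕ} (X : Finset (Pt d)) (Xs : Fin k → Finset (Pt d))

/-- The set of covered clusters. -/
noncomputable def covS (C : Finset (Pt d)) : Finset (Fin k) :=
  Finset.univ.filter (fun j => ∃ c ∈ C, c ∈ Xs j)

/-- Cost of `C` on the covered clusters. -/
noncomputable def aV (C : Finset (Pt d)) : ℝ := ∑ j ∈ covS Xs C, Phi C (Xs j)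

/-- Cost of `C` on the uncovered clusters. -/
noncomputable def bV (C : Finset (Pt d)) : ℝ := ∑ j ∈ (covS Xs C)ᶜ, Phi C (Xs j)

/-- Optimal cost of the uncovered clusters. -/
noncomputable def oV (C : Finset (Pt d)) : ℝ := ∑ j ∈ (covS Xs C)ᶜ, Delta1 (Xs j)

/-- Number of uncovered clusters. -/
noncomputable def uV (C : Finset (Pt d)) : ℕ := ((covS Xs C)ᶜ).card

lemma mem_covS {C : Finset (Pt d)} {j : Fin k} :
    j ∈ covS Xs C ↔ ∃ c ∈ C, c ∈ Xs j := by simp [covS]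

variable (hdisj : ∀ j l, j ≠ l → Disjoint (Xs j) (Xs l))
    (hunion : Finset.univ.biUnion Xs = X)

include hdisj in
lemma cluster_unique {x : Pt d} {j l : Fin k} (hj : x ∈ Xs j) (hl : x ∈ Xs l) : j = l := by
  by_contra hne
  exact Finset.disjoint_left.mp (hdisj j l hne) hj hl

include hdisj in
lemma uncov_iff {C : Finset (Pt d)} {x : Pt d} {j : Fin k} (hx : x ∈ Xs j) :
    Uncov Xs C x ↔ j ∉ covS Xs C := by
  constructor
  · rintro ⟨j', hxj', hall⟩ hcov
    obtain rfl := cluster_unique Xs hdisj hx hxj'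
    obtain ⟨c, hc, hcj⟩ := mem_covS Xs |>.mp hcov
    exact hall c hc hcj
  · intro h
    exact ⟨j, hx, fun c hc hcj => h ((mem_covS Xs).mpr ⟨c, hc, hcj⟩)⟩

include hdisj hunion in
lemma X_sum (f : Pt d → ℝ) : ∑ x ∈ X, f x = ∑ j, ∑ x ∈ Xs j, f x := by
  rw [← hunion]
  exact Finset.sum_biUnion fun j _ l _ hjl => hdisj j l hjl

include hdisj hunion in
lemma Phi_split (C : Finset (Pt d)) : Phi C X = aV Xs C + bV Xs C := by
  rw [Phi_eq, X_sum X Xs hdisj hunion (phi C)]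
  have : ∀ j, ∑ x ∈ Xs j, phi C x = Phi C (Xs j) := fun j => (Phi_eq C (Xs j)).symm
  rw [Finset.sum_congr rfl fun j _ => this j]
  rw [← Finset.sum_add_sum_compl (covS Xs C) (fun j => Phi C (Xs j))]
  rfl

lemma aV_nonneg (C : Finset (Pt d)) : 0 ≤ aV Xs C :=
  Finset.sum_nonneg fun j _ => Phi_nonneg _ _

lemma bV_nonneg (C : Finset (Pt d)) : 0 ≤ bV Xs C :=
  Finset.sum_nonneg fun j _ => Phi_nonneg _ _

lemma oV_nonneg (C : Finset (Pt d)) : 0 ≤ oV Xs C :=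
  Finset.sum_nonneg fun j _ => Delta1_nonneg _

lemma bV_eq_zero {C : Finset (Pt d)} (h : uV Xs C = 0) : bV Xs C = 0 := by
  unfold uV at h
  rw [Finset.card_eq_zero] at h
  unfold bV
  rw [h, Finset.sum_empty]

include hdisj in
lemma covS_insert {C : Finset (Pt d)} {x : Pt d} {j : Fin k}
    (hx : x ∈ Xs j) : covS Xs (insert x C) = insert j (covS Xs C) := by
  ext l
  rw [mem_covS, Finset.mem_insert, mem_covS]
  constructor
  · rintro ⟨c, hc, hcl⟩
    rcases Finset.mem_insert.mp hc with rfl | hcC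
    · exact Or.inl (cluster_unique Xs hdisj hcl hx)
    · exact Or.inr ⟨c, hcC, hcl⟩
  · rintro (rfl | ⟨c, hc, hcl⟩)
    · exact ⟨x, Finset.mem_insert_self x C, hx⟩
    · exact ⟨c, Finset.mem_insert_of_mem hc, hcl⟩

include hdisj in
lemma aV_insert {C : Finset (Pt d)} (hC : C.Nonempty) {x : Pt d} {j : Fin k}
    (hx : x ∈ Xs j) (hj : j ∉ covS Xs C) :
    aV Xs (insert x C) ≤ Phi (insert x C) (Xs j) + aV Xs C := by
  unfold aV
  rw [covS_insert Xs hdisj hx, Finset.sum_insert hj]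
  gcongr  with l hl
  exact Phi_mono (Finset.subset_insert x C) hC (Xs l)

include hdisj in
lemma oV_insert {C : Finset (Pt d)} {x : Pt d} {j : Fin k}
    (hx : x ∈ Xs j) (hj : j ∉ covS Xs C) :
    oV Xs (insert x C) = oV Xs C - Delta1 (Xs j) := by
  unfold oV
  rw [covS_insert Xs hdisj hx, Finset.compl_insert,
    Finset.sum_erase_eq_sub (Finset.mem_compl.mpr hj)]

include hdisj in
lemma bV_insert {C : Finset (Pt d)} (hC : C.Nonempty) {x : Pt d} {j : Fin k}
    (hx : x ∈ Xs j) : bV Xs (insert x C) ≤ bV Xs C := by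
  unfold bV
  rw [covS_insert Xs hdisj hx, Finset.compl_insert]
  calc ∑ l ∈ ((covS Xs C)ᶜ).erase j, Phi (insert x C) (Xs l)
      ≤ ∑ l ∈ ((covS Xs C)ᶜ).erase j, Phi C (Xs l) :=
        Finset.sum_le_sum fun l _ => Phi_mono (Finset.subset_insert x C) hC (Xs l)
    _ ≤ ∑ l ∈ (covS Xs C)ᶜ, Phi C (Xs l) :=
        Finset.sum_le_sum_of_subset_of_nonneg (Finset.erase_subset j _)
          (fun l _ _ => Phi_nonneg _ _)

include hdisj in
lemma uV_insert {C : Finset (Pt d)} {x : Pt d} {j : Fin k}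
    (hx : x ∈ Xs j) (hj : j ∉ covS Xs C) :
    uV Xs (insert x C) = uV Xs C - 1 := by
  unfold uV
  rw [covS_insert Xs hdisj hx, Finset.compl_insert,
    Finset.card_erase_of_mem (Finset.mem_compl.mpr hj)]

include hdisj in
lemma uV_insert_pos {C : Finset (Pt d)} {x : Pt d} {j : Fin k}
    (hx : x ∈ Xs j) (hj : j ∉ covS Xs C) : 0 < uV Xs C :=
  Finset.card_pos.mpr ⟨j, Finset.mem_compl.mpr hj⟩

end Clusters

section MainInd

variable {d k : ℕ} (X : Finset (Pt d)) (Xs : Fin k → Finset (Pt d))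

lemma qb_bound (hk : 1 < k) {a b : ℝ} (ha : 0 ≤ a) (hab : a ≤ b) (hpos : 0 < a + b) :
    (a / (a + b)) ^ (Nat.clog 2 k) * b ≤ a / ((k : ℝ) - 1) := by
  have hb : 0 ≤ b := le_trans ha hab
  have hk2 : (2 : ℝ) ≤ (k : ℝ) := by exact_mod_cast hk
  have hk1 : (0 : ℝ) < (k : ℝ) - 1 := by linarith
  set s : ℝ := a / (a + b) with hs
  have hs0 : 0 ≤ s := div_nonneg ha hpos.le
  have hs2 : s ≤ 1 / 2 := by
    rw [hs, div_le_div_iff₀ hpos (by norm_num)]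
    linarith
  rcases eq_or_lt_of_le (Nat.succ_le_of_lt hk) with hk2' | hk3
  · -- k = 2
    have hkk : k = 2 := hk2'.symm
    have hm : Nat.clog 2 k = 1 := by
      rw [hkk]; exact Nat.clog_eq_one (by norm_num) (by norm_num)
    rw [hm, pow_one, hkk]
    have h1 : s * b ≤ a := by
      have hble : b / (a + b) ≤ 1 := by
        rw [div_le_one hpos]; linarith
      have : s * b = a * (b / (a + b)) := by
        rw [hs]; ring
      rw [this]
      calc a * (b / (a + b)) ≤ a * 1 := by
            exact mul_le_mul_of_nonneg_left hble ha
        _ = a := mul_one a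
    calc s * b ≤ a := h1
      _ = a / ((2 : ℕ) - 1 : ℝ) := by norm_num
  · -- k ≥ 3
    have hm2 : 2 ≤ Nat.clog 2 k := by
      have : 1 < Nat.clog 2 k := by
        rw [Nat.lt_clog_iff_pow_lt (by norm_num)]
        norm_num
        omega
      omega
    obtain ⟨m', hm'⟩ : ∃ m', Nat.clog 2 k = m' + 2 :=
      ⟨Nat.clog 2 k - 2, by omega⟩
    have hkm : (k : ℝ) ≤ 2 ^ (m' + 2) := by
      rw [← hm']
      exact_mod_cast Nat.le_pow_clog (by norm_num) k
    have hssb : s * s * b ≤ a / 4 := by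
      have h4 : a * b ≤ (a + b) ^ 2 / 4 := by nlinarith [sq_nonneg (a - b)]
      have he : s * s * b = a * (a * b) / (a + b) ^ 2 := by
        rw [hs]; field_simp
      rw [he, div_le_div_iff₀ (by positivity) (by norm_num : (0:ℝ) < 4)]
      nlinarith [mul_le_mul_of_nonneg_left h4 ha]
    have hspow : s ^ m' ≤ (1 / 2 : ℝ) ^ m' := pow_le_pow_left₀ hs0 hs2 m'
    have hchain : s ^ (m' + 2) * b ≤ a / 2 ^ (m' + 2) := by
      have e : s ^ (m' + 2) * b = s ^ m' * (s * s * b) := by ring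
      rw [e]
      calc s ^ m' * (s * s * b) ≤ (1 / 2 : ℝ) ^ m' * (a / 4) := by
            apply mul_le_mul hspow hssb (by positivity) (by positivity)
        _ = a / 2 ^ (m' + 2) := by
            rw [pow_add, div_pow, one_pow, div_mul_div_comm, one_mul]
            norm_num
    rw [hm']
    calc s ^ (m' + 2) * b ≤ a / 2 ^ (m' + 2) := hchain
      _ ≤ a / (k : ℝ) := by
          exact div_le_div_of_nonneg_left ha (by linarith) hkm
      _ ≤ a / ((k : ℝ) - 1) := by
          exact div_le_div_of_nonneg_left ha hk1 (by linarith)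

set_option maxHeartbeats 2000000 in
lemma main_induction (hk : 1 < k) (hne : ∀ j, (Xs j).Nonempty)
    (hdisj : ∀ j l, j ≠ l → Disjoint (Xs j) (Xs l))
    (hunion : Finset.univ.biUnion Xs = X) :
    ∀ t, t ≤ k → ∀ C : Finset (Pt d), C.Nonempty →
      EF X Xs t C ≤ (2 + (t : ℝ) / ((k : ℝ) - 1)) * aV Xs C + 24 * oV Xs C +
        (if t < uV Xs C then bV Xs C else 0) := by
  have hk2 : (2 : ℝ) ≤ (k : ℝ) := by exact_mod_cast hk
  have hk1 : (0 : ℝ) < (k : ℝ) - 1 := by linarith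
  intro t
  induction t with
  | zero =>
    intro _ C hC
    rw [EF_zero, Phi_split X Xs hdisj hunion C]
    have ha := aV_nonneg Xs C
    have ho := oV_nonneg Xs C
    simp only [Nat.cast_zero, zero_div, add_zero]
    by_cases hu : 0 < uV Xs C
    · rw [if_pos hu]; linarith
    · rw [if_neg hu, bV_eq_zero Xs (by omega)]; linarith
  | succ t ih =>
    intro htk C hC
    have ha := aV_nonneg Xs C
    have hb := bV_nonneg Xs C
    have ho := oV_nonneg Xs C
    set a := aV Xs C with hadef
    set b := bV Xs C with hbdef
    set o := oV Xs C with hodef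
    set A' : ℝ := 2 + (t : ℝ) / ((k : ℝ) - 1) with hA'def
    have hA'2 : 2 ≤ A' := by
      have h0 : 0 ≤ (t : ℝ) / ((k : ℝ) - 1) := by positivity
      rw [hA'def]; linarith
    have hA'3 : A' ≤ 3 := by
      have ht1 : (t : ℝ) ≤ (k : ℝ) - 1 := by
        have : (t : ℝ) + 1 ≤ (k : ℝ) := by exact_mod_cast htk
        linarith
      have h1 : (t : ℝ) / ((k : ℝ) - 1) ≤ 1 := by
        rw [div_le_one hk1]; exact ht1
      rw [hA'def]; linarith
    set I : ℝ := if t + 1 < uV Xs C then b else 0 with hIdef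
    have hI0 : 0 ≤ I := by
      rw [hIdef]; split
      · exact hb
      · exact le_refl 0
    have hIb : I ≤ b := by
      rw [hIdef]; split
      · exact le_refl b
      · exact hb
    set M : ℝ := A' * a + 24 * o + I with hMdef
    have hM0 : 0 ≤ M := by
      rw [hMdef]
      have h24 : (0:ℝ) ≤ 24 * o := by linarith
      exact add_nonneg (add_nonneg (mul_nonneg (by linarith) ha) h24) hI0
    -- goal's RHS
    by_cases hΦ0 : Phi C X = 0
    · have hle : EF X Xs (t + 1) C ≤ 0 := by
        rw [← hΦ0]; exact EF_le_Phi X Xs (t + 1) hC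
      refine hle.trans ?_
      have h1 : 0 ≤ (2 + ((t : ℕ) + 1 : ℝ) / ((k : ℝ) - 1)) * a :=
        mul_nonneg (by positivity) ha
      have h2 : 0 ≤ (if t + 1 < uV Xs C then b else 0) := by
        split
        · exact hb
        · exact le_refl 0
      push_cast
      nlinarith
    have hΦpos : 0 < Phi C X := lt_of_le_of_ne (Phi_nonneg _ _) (Ne.symm hΦ0)
    have hsplit : Phi C X = a + b := Phi_split X Xs hdisj hunion C
    -- the per-cluster success bound
    have hsucc : ∀ j ∈ (covS Xs C)ᶜ,
        ∑ x ∈ Xs j, phi C x * EF X Xs t (insert x C) ≤ Phi C (Xs j) * M := by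
      intro j hj
      have hjnc : j ∉ covS Xs C := Finset.mem_compl.mp hj
      have hAne : (Xs j).Nonempty := hne j
      have hupos : 0 < uV Xs C := uV_insert_pos Xs hdisj hAne.choose_spec hjnc
      have hper : ∀ x ∈ Xs j, EF X Xs t (insert x C) ≤
          A' * (a + Phi (insert x C) (Xs j)) + 24 * (o - Delta1 (Xs j)) + I := by
        intro x hx
        have hupos' : 0 < uV Xs C := uV_insert_pos Xs hdisj hx hjnc
        have h1 := ih (by omega) (insert x C) (Finset.insert_nonempty x C)
        refine h1.trans ?_
        have e1 : aV Xs (insert x C) ≤ Phi (insert x C) (Xs j) + a :=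
          aV_insert Xs hdisj hC hx hjnc
        have e2 : oV Xs (insert x C) = o - Delta1 (Xs j) := oV_insert Xs hdisj hx hjnc
        have e3 : (if t < uV Xs (insert x C) then bV Xs (insert x C) else 0) ≤ I := by
          rw [uV_insert Xs hdisj hx hjnc, hIdef]
          have hcond : (t < uV Xs C - 1) ↔ (t + 1 < uV Xs C) := by omega
          by_cases hc : t + 1 < uV Xs C
          · rw [if_pos (hcond.mpr hc), if_pos hc]
            exact bV_insert Xs hdisj hC hx
          · rw [if_neg (fun hlt => hc (hcond.mp hlt)), if_neg hc]
        have hA'0 : (0:ℝ) ≤ A' := by linarith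
        calc A' * aV Xs (insert x C) + 24 * oV Xs (insert x C) +
              (if t < uV Xs (insert x C) then bV Xs (insert x C) else 0)
            ≤ A' * (Phi (insert x C) (Xs j) + a) + 24 * (o - Delta1 (Xs j)) + I := by
              rw [e2]
              exact add_le_add (add_le_add_left
                (mul_le_mul_of_nonneg_left e1 hA'0) _) e3
          _ = A' * (a + Phi (insert x C) (Xs j)) + 24 * (o - Delta1 (Xs j)) + I := by
              ring
      have hA'0 : (0:ℝ) ≤ A' := by linarith
      calc ∑ x ∈ Xs j, phi C x * EF X Xs t (insert x C)
          ≤ ∑ x ∈ Xs j, phi C x *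
              (A' * (a + Phi (insert x C) (Xs j)) + 24 * (o - Delta1 (Xs j)) + I) :=
            Finset.sum_le_sum fun x hx =>
              mul_le_mul_of_nonneg_left (hper x hx) (phi_nonneg C x)
        _ = (A' * a + 24 * (o - Delta1 (Xs j)) + I) * Phi C (Xs j) +
              A' * ∑ x ∈ Xs j, phi C x * Phi (insert x C) (Xs j) := by
            have hdist : ∀ x ∈ Xs j, phi C x *
                (A' * (a + Phi (insert x C) (Xs j)) + 24 * (o - Delta1 (Xs j)) + I)
                = (A' * a + 24 * (o - Delta1 (Xs j)) + I) * phi C x +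
                  A' * (phi C x * Phi (insert x C) (Xs j)) := fun x _ => by ring
            rw [Finset.sum_congr rfl hdist, Finset.sum_add_distrib, ← Finset.mul_sum,
              ← Finset.mul_sum, Phi_eq]
        _ ≤ (A' * a + 24 * (o - Delta1 (Xs j)) + I) * Phi C (Xs j) +
              A' * (8 * Delta1 (Xs j) * Phi C (Xs j)) := by
            exact add_le_add_right
              (mul_le_mul_of_nonneg_left (av_lemma hAne hC) hA'0) _
        _ ≤ Phi C (Xs j) * M := by
            have hPj : 0 ≤ Phi C (Xs j) := Phi_nonneg _ _
            have hDj : 0 ≤ Delta1 (Xs j) := Delta1_nonneg _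
            have h8 : 8 * A' ≤ 24 := by linarith
            simp only [hMdef]
            nlinarith [mul_nonneg (mul_nonneg hDj hPj) (sub_nonneg.mpr h8)]
    -- the inner induction over the tries of one outer iteration
    set β : ℝ := a / Phi C X with hβdef
    have hβ0 : 0 ≤ β := div_nonneg ha hΦpos.le
    have hβ1 : β ≤ 1 := by
      rw [hβdef, div_le_one hΦpos, hsplit]; linarith
    have inner : ∀ r : ℕ,
        ∑ D ∈ (X ∪ C).powerset, tryK X Xs r C D * EF X Xs t D
          ≤ β ^ r * Phi C X + (1 - β ^ r) * M := by
      intro r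
      induction r with
      | zero =>
        simp only [tryK, pow_zero, one_mul, sub_self, zero_mul, add_zero, ite_mul,
          zero_mul, one_mul]
        rw [Finset.sum_ite_eq' (X ∪ C).powerset C (fun D => EF X Xs t D),
          if_pos (Finset.mem_powerset.mpr Finset.subset_union_right)]
        exact EF_le_Phi X Xs t hC
      | succ r ihr =>
        have hstep : ∑ D ∈ (X ∪ C).powerset, tryK X Xs (r+1) C D * EF X Xs t D
            = ∑ x ∈ X, (phi C x / Phi C X) *
                (if Uncov Xs C x then EF X Xs t (insert x C)
                 else ∑ D ∈ (X ∪ C).powerset, tryK X Xs r C D * EF X Xs t D) := by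
          simp only [tryK]
          rw [Finset.sum_congr rfl fun D (_ : D ∈ (X ∪ C).powerset) =>
            Finset.sum_mul _ _ (EF X Xs t D), Finset.sum_comm]
          refine Finset.sum_congr rfl fun x hx => ?_
          rw [Phi_singleton]
          by_cases hu : Uncov Xs C x
          · simp only [if_pos hu, mul_ite, mul_one, mul_zero, ite_mul, zero_mul]
            rw [Finset.sum_ite_eq' (X ∪ C).powerset (insert x C)
              (fun D => phi C x / Phi C X * EF X Xs t D)]
            rw [if_pos (Finset.mem_powerset.mpr (Finset.insert_subset
              (Finset.mem_union_left C hx) Finset.subset_union_right))]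
          · simp only [if_neg hu]
            rw [Finset.sum_congr rfl fun D (_ : D ∈ (X ∪ C).powerset) =>
              mul_assoc (phi C x / Phi C X) (tryK X Xs r C D) (EF X Xs t D),
              ← Finset.mul_sum]
        rw [hstep]
        set Sr := ∑ D ∈ (X ∪ C).powerset, tryK X Xs r C D * EF X Xs t D with hSr
        rw [X_sum X Xs hdisj hunion]
        have hsplitsum :
            ∑ j, ∑ x ∈ Xs j, (phi C x / Phi C X) *
              (if Uncov Xs C x then EF X Xs t (insert x C) else Sr)
            = (∑ j ∈ covS Xs C, (Phi C (Xs j) / Phi C X) * Sr) +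
              ∑ j ∈ (covS Xs C)ᶜ, ∑ x ∈ Xs j,
                (phi C x / Phi C X) * EF X Xs t (insert x C) := by
          rw [← Finset.sum_add_sum_compl (covS Xs C)]
          congr 1
          · refine Finset.sum_congr rfl fun j hj => ?_
            have : ∀ x ∈ Xs j, (phi C x / Phi C X) *
                (if Uncov Xs C x then EF X Xs t (insert x C) else Sr)
                = (phi C x / Phi C X) * Sr := by
              intro x hx
              rw [if_neg (fun hu => ((uncov_iff Xs hdisj hx).mp hu) hj)]
            rw [Finset.sum_congr rfl this, ← Finset.sum_mul, ← Finset.sum_div, ← Phi_eq]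
          · refine Finset.sum_congr rfl fun j hj => ?_
            refine Finset.sum_congr rfl fun x hx => ?_
            rw [if_pos ((uncov_iff Xs hdisj hx).mpr (Finset.mem_compl.mp hj))]
        rw [hsplitsum]
        have hcovpart : ∑ j ∈ covS Xs C, (Phi C (Xs j) / Phi C X) * Sr = β * Sr := by
          rw [← Finset.sum_mul, ← Finset.sum_div, hβdef]
          rfl
        have huncpart : ∑ j ∈ (covS Xs C)ᶜ, ∑ x ∈ Xs j,
            (phi C x / Phi C X) * EF X Xs t (insert x C) ≤ (1 - β) * M := by
          have hper : ∀ j ∈ (covS Xs C)ᶜ, ∑ x ∈ Xs j,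
              (phi C x / Phi C X) * EF X Xs t (insert x C)
              ≤ (Phi C (Xs j) / Phi C X) * M := by
            intro j hj
            have e : ∀ x ∈ Xs j, (phi C x / Phi C X) * EF X Xs t (insert x C)
                = (phi C x * EF X Xs t (insert x C)) / Phi C X := fun x _ => by ring
            rw [Finset.sum_congr rfl e, ← Finset.sum_div, div_mul_eq_mul_div]
            exact div_le_div_of_nonneg_right (hsucc j hj) hΦpos.le
          calc ∑ j ∈ (covS Xs C)ᶜ, ∑ x ∈ Xs j,
              (phi C x / Phi C X) * EF X Xs t (insert x C)
              ≤ ∑ j ∈ (covS Xs C)ᶜ, (Phi C (Xs j) / Phi C X) * M :=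
                Finset.sum_le_sum hper
            _ = (b / Phi C X) * M := by
                rw [← Finset.sum_mul, ← Finset.sum_div]
                rfl
            _ = (1 - β) * M := by
                have h1 : (1:ℝ) - β = b / Phi C X := by
                  rw [hβdef]
                  field_simp
                  linarith [hsplit]
                rw [h1]
          -- end
        have hβSr : β * Sr ≤ β * (β ^ r * Phi C X + (1 - β ^ r) * M) :=
          mul_le_mul_of_nonneg_left ihr hβ0
        calc (∑ j ∈ covS Xs C, (Phi C (Xs j) / Phi C X) * Sr) +
              ∑ j ∈ (covS Xs C)ᶜ, ∑ x ∈ Xs j,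
                (phi C x / Phi C X) * EF X Xs t (insert x C)
            ≤ β * (β ^ r * Phi C X + (1 - β ^ r) * M) + (1 - β) * M := by
              rw [hcovpart]
              exact add_le_add hβSr huncpart
          _ = β ^ (r+1) * Phi C X + (1 - β ^ (r+1)) * M := by ring
    -- apply at r = the number of tries
    have hEFsucc : EF X Xs (t + 1) C ≤ β ^ (Nat.clog 2 k) * Phi C X +
        (1 - β ^ (Nat.clog 2 k)) * M := by
      rw [EF_succ]
      have : ∀ D ∈ (X ∪ C).powerset, iterK X Xs C D * EF X Xs t D
          = tryK X Xs (Nat.clog 2 k) C D * EF X Xs t D := by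
        intro D _
        rw [iterK, if_neg hΦ0]
      rw [Finset.sum_congr rfl this]
      exact inner _
    set q : ℝ := β ^ (Nat.clog 2 k) with hqdef
    have hq0 : 0 ≤ q := pow_nonneg hβ0 _
    have hq1 : q ≤ 1 := pow_le_one₀ hβ0 hβ1
    refine hEFsucc.trans ?_
    have hAsucc : 2 + ((t : ℕ) + 1 : ℝ) / ((k : ℝ) - 1) = A' + 1 / ((k : ℝ) - 1) := by
      rw [hA'def]; ring
    push_cast
    rw [hAsucc]
    clear_value q β M I A' o b a
    have hIk : 0 ≤ 1 / ((k:ℝ) - 1) := by positivity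
    by_cases hc : t + 1 < uV Xs C
    · -- indicator on, I = b
      have hIb' : I = b := by rw [hIdef, if_pos hc]
      rw [hsplit]
      simp only [hMdef, hIb']
      have h1 : 0 ≤ q * (A' - 1) * a := by
        apply mul_nonneg (mul_nonneg hq0 (by linarith)) ha
      have h2 : 0 ≤ q * (24 * o) := mul_nonneg hq0 (by linarith)
      have h3 : 0 ≤ (1 / ((k:ℝ) - 1)) * a := mul_nonneg (by positivity) ha
      nlinarith
    · -- indicator off, I = 0
      have hI0' : I = (0:ℝ) := by rw [hIdef, if_neg hc]
      rw [hsplit]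
      simp only [hMdef, hI0']
      by_cases hba : b ≤ a
      · have hqb : q * b ≤ q * a := mul_le_mul_of_nonneg_left hba hq0
        have h1 : 0 ≤ q * (A' - 2) * a := by
          apply mul_nonneg (mul_nonneg hq0 (by linarith)) ha
        have h2 : 0 ≤ q * (24 * o) := mul_nonneg hq0 (by linarith)
        have h3 : 0 ≤ (1 / ((k:ℝ) - 1)) * a := mul_nonneg (by positivity) ha
        nlinarith
      · have hab' : a ≤ b := le_of_not_ge hba
        have hqb : q * b ≤ a / ((k:ℝ) - 1) := by
          rw [hqdef, hβdef, hsplit]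
          exact qb_bound hk ha hab' (by rw [← hsplit]; exact hΦpos)
        have h1 : 0 ≤ q * (A' - 1) * a := by
          apply mul_nonneg (mul_nonneg hq0 (by linarith)) ha
        have h2 : 0 ≤ q * (24 * o) := mul_nonneg hq0 (by linarith)
        have hd : a / ((k:ℝ) - 1) = 1 / ((k:ℝ) - 1) * a := by ring
        nlinarith [hqb, h1, h2, hd]

end MainInd

end KMXQ

/-- Run `Query-k-means++` on a finite set `X ⊆ ℝ^d` with `k > 1`:
pick the first center `c` uniformly at random from `X` and perform `k − 1` outer
iterations; the resulting random center set `C` satisfies `E[Φ(C, X)] ≤ 24·Δ_k(X)`. -/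
theorem stmt_5 {d k : ℕ} (hk : 1 < k) (X : Finset (Pt d)) (hX : X.Nonempty)
    (Xs : Fin k → Finset (Pt d)) (hopt : IsOptPartition k X Xs) :
    ∑ c ∈ X, (X.card : ℝ)⁻¹ *
        ∑ C' ∈ (X ∪ {c}).powerset, stepsK X Xs (k - 1) {c} C' * Phi C' X ≤
      24 * DeltaK k X := by
  classical
  obtain ⟨hne, hdisj, hunion, hsum⟩ := hopt
  set OPT : ℝ := ∑ l, Delta1 (Xs l) with hOPT
  have hk1 : (0:ℝ) < (k:ℝ) - 1 := by
    have : (2:ℝ) ≤ (k:ℝ) := by exact_mod_cast hk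
    linarith
  have hn0 : (0:ℝ) < (X.card : ℝ) := by exact_mod_cast Finset.card_pos.mpr hX
  have hinv0 : (0:ℝ) ≤ (X.card : ℝ)⁻¹ := by positivity
  -- per-starting-point bound
  have hper : ∀ c ∈ X, KMXQ.EF X Xs (k - 1) {c} ≤
      3 * KMXQ.aV Xs {c} + 24 * KMXQ.oV Xs {c} := by
    intro c hc
    obtain ⟨j, -, hcj⟩ := Finset.mem_biUnion.mp (hunion ▸ hc)
    have hcov : KMXQ.covS Xs {c} = {j} := by
      ext l
      rw [KMXQ.mem_covS, Finset.mem_singleton]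
      constructor
      · rintro ⟨c', hc', hcl⟩
        rw [Finset.mem_singleton] at hc'
        subst hc'
        exact KMXQ.cluster_unique Xs hdisj hcl hcj
      · rintro rfl
        exact ⟨c, Finset.mem_singleton_self c, hcj⟩
    have huV : KMXQ.uV Xs {c} = k - 1 := by
      rw [KMXQ.uV, hcov, Finset.card_compl, Finset.card_singleton, Fintype.card_fin]
    have hmain := KMXQ.main_induction X Xs hk hne hdisj hunion (k - 1) (by omega)
      {c} (Finset.singleton_nonempty c)
    have hite : (if k - 1 < KMXQ.uV Xs {c} then KMXQ.bV Xs {c} else 0) = 0 := by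
      rw [huV, if_neg (lt_irrefl _)]
    have hcoef : 2 + ((k - 1 : ℕ) : ℝ) / ((k : ℝ) - 1) = 3 := by
      rw [Nat.cast_sub hk.le, Nat.cast_one, div_self (ne_of_gt hk1)]
      norm_num
    rw [hite, add_zero, hcoef] at hmain
    exact hmain
  have haVeq : ∀ j, ∀ c ∈ Xs j, KMXQ.aV Xs {c} = Phi {c} (Xs j) := by
    intro j c hcj
    have hcov : KMXQ.covS Xs {c} = {j} := by
      ext l
      rw [KMXQ.mem_covS, Finset.mem_singleton]
      constructor
      · rintro ⟨c', hc', hcl⟩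
        rw [Finset.mem_singleton] at hc'
        subst hc'
        exact KMXQ.cluster_unique Xs hdisj hcl hcj
      · rintro rfl
        exact ⟨c, Finset.mem_singleton_self c, hcj⟩
    rw [KMXQ.aV, hcov, Finset.sum_singleton]
  have hoVeq : ∀ j, ∀ c ∈ Xs j, KMXQ.oV Xs {c} = OPT - Delta1 (Xs j) := by
    intro j c hcj
    have hcov : KMXQ.covS Xs {c} = {j} := by
      ext l
      rw [KMXQ.mem_covS, Finset.mem_singleton]
      constructor
      · rintro ⟨c', hc', hcl⟩
        rw [Finset.mem_singleton] at hc'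
        subst hc'
        exact KMXQ.cluster_unique Xs hdisj hcl hcj
      · rintro rfl
        exact ⟨c, Finset.mem_singleton_self c, hcj⟩
    have := Finset.sum_compl_add_sum ({j} : Finset (Fin k)) (fun l => Delta1 (Xs l))
    rw [Finset.sum_singleton] at this
    rw [KMXQ.oV, hcov, hOPT]
    linarith
  have hcard : ∑ j, ((Xs j).card : ℝ) = (X.card : ℝ) := by
    rw [← hunion, Finset.card_biUnion (fun x _ y _ hxy => hdisj x y hxy)]
    push_cast
    rfl
  calc ∑ c ∈ X, (X.card : ℝ)⁻¹ *
        ∑ C' ∈ (X ∪ {c}).powerset, stepsK X Xs (k - 1) {c} C' * Phi C' X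
      = (X.card : ℝ)⁻¹ * ∑ c ∈ X, KMXQ.EF X Xs (k - 1) {c} := by
        simp only [KMXQ.EF]
        rw [Finset.mul_sum]
    _ ≤ (X.card : ℝ)⁻¹ * ∑ c ∈ X, (3 * KMXQ.aV Xs {c} + 24 * KMXQ.oV Xs {c}) :=
        mul_le_mul_of_nonneg_left (Finset.sum_le_sum hper) hinv0
    _ = (X.card : ℝ)⁻¹ * ∑ j, ∑ c ∈ Xs j, (3 * KMXQ.aV Xs {c} + 24 * KMXQ.oV Xs {c}) := by
        rw [KMXQ.X_sum X Xs hdisj hunion]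
    _ = (X.card : ℝ)⁻¹ * ∑ j, (6 * ((Xs j).card : ℝ) * Delta1 (Xs j)
          + 24 * ((Xs j).card : ℝ) * (OPT - Delta1 (Xs j))) := by
        congr 1
        refine Finset.sum_congr rfl fun j _ => ?_
        have h1 : ∀ c ∈ Xs j, 3 * KMXQ.aV Xs {c} + 24 * KMXQ.oV Xs {c}
            = 3 * Phi {c} (Xs j) + 24 * (OPT - Delta1 (Xs j)) := by
          intro c hcj
          rw [haVeq j c hcj, hoVeq j c hcj]
        rw [Finset.sum_congr rfl h1, Finset.sum_add_distrib, ← Finset.mul_sum,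
          KMXQ.sum_Phi_single (hne j), Finset.sum_const, nsmul_eq_mul]
        ring
    _ ≤ (X.card : ℝ)⁻¹ * ∑ j, 24 * ((Xs j).card : ℝ) * OPT := by
        apply mul_le_mul_of_nonneg_left _ hinv0
        refine Finset.sum_le_sum fun j _ => ?_
        have hD := KMXQ.Delta1_nonneg (Xs j)
        have hcnonneg : (0:ℝ) ≤ ((Xs j).card : ℝ) := by positivity
        nlinarith [mul_nonneg hcnonneg hD]
    _ = 24 * OPT := by
        have : ∑ j, 24 * ((Xs j).card : ℝ) * OPT
            = 24 * OPT * ∑ j, ((Xs j).card : ℝ) := by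
          rw [Finset.mul_sum]
          exact Finset.sum_congr rfl fun j _ => by ring
        rw [this, hcard]
        field_simp
    _ = 24 * DeltaK k X := by rw [hsum]
end
end

section
/- Let 0 < ε ≤ 1/2, let X ⊆ ℝ^d be finite and (k,ε)-irreducible with optimal k-means partition X₁,…,X_k, let 1 ≤ i < k, and let C_i be a set of i centers satisfying the invariant P(i). Then Φ(C_i, X_{i+1} ∪ … ∪ X_k) ≥ (ε/4)·Φ(C_i, X). -/
open Finset
open scoped BigOperators
open Classical

noncomputable section

lemma phi_nonneg {d : ℕ} (C X : Finset (Pt d)) : 0 ≤ Phi C X :=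
  Finset.sum_nonneg fun x _ => Real.sInf_nonneg (by rintro y ⟨cc, -, rfl⟩; positivity)

lemma phi_mono {d : ℕ} {C C' : Finset (Pt d)} (hC : C.Nonempty) (h : C ⊆ C')
    (X : Finset (Pt d)) : Phi C' X ≤ Phi C X := by
  apply Finset.sum_le_sum
  intro x _
  apply csInf_le_csInf
  · exact ⟨0, by rintro y ⟨cc, -, rfl⟩; positivity⟩
  · exact (Finset.coe_nonempty.mpr hC).image _
  · exact Set.image_mono (by exact_mod_cast h)

lemma phi_singleton {d : ℕ} (cc : Pt d) (X : Finset (Pt d)) :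
    Phi {cc} X = ∑ x ∈ X, ‖x - cc‖ ^ 2 := by
  unfold Phi
  refine Finset.sum_congr rfl fun x _ => ?_
  rw [Finset.coe_singleton, Set.image_singleton, csInf_singleton]

lemma delta1_nonneg {d : ℕ} (X : Finset (Pt d)) : 0 ≤ Delta1 X := phi_nonneg _ _

lemma deltaK_le {d : ℕ} (m : ℕ) (X C : Finset (Pt d)) (h : C.card = m) :
    DeltaK m X ≤ Phi C X := by
  apply csInf_le
  · exact ⟨0, by rintro y ⟨C', -, rfl⟩; exact phi_nonneg _ _⟩
  · exact ⟨C, h, rfl⟩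

/-- Under the invariant `P(i)` (clusters reindexed so the covered clusters
are `X₁, …, X_i`), the uncovered clusters carry at least an `ε/4` fraction of the current
cost: `Φ(C_i, X_{i+1} ∪ … ∪ X_k) ≥ (ε/4)·Φ(C_i, X)`. -/
theorem stmt_7 {d k : ℕ} (ε : ℝ) (hε0 : 0 < ε) (hε : ε ≤ 1 / 2)
    (X : Finset (Pt d)) (hirr : KIrreducible k ε X)
    (Xs : Fin k → Finset (Pt d)) (hopt : IsOptPartition k X Xs)
    (i : ℕ) (hi : 1 ≤ i) (hik : i < k)
    (c : Fin k → Pt d) (Ci : Finset (Pt d)) (hinv : InvariantP ε X Xs i c Ci) :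
    (ε / 4) * Phi Ci X ≤
      Phi Ci ((Finset.univ.filter (fun j : Fin k => i ≤ j.val)).biUnion Xs) := by
  obtain ⟨hCi_eq, hgood, hpos⟩ := hinv
  obtain ⟨hne, hdisj, hunion, hsum⟩ := hopt
  -- the type of points is infinite
  have hj0 : (0 : ℕ) < k := by omega
  set j0 : Fin k := ⟨0, hj0⟩ with hj0def
  set r₀ : Fin k := ⟨i, hik⟩ with hr₀def
  obtain ⟨x0, hx0⟩ := hne j0
  obtain ⟨y0, hy0⟩ := hne r₀
  have hxy : x0 ≠ y0 := by
    intro h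
    have hd := hdisj j0 r₀ (by
      intro h'
      have : (j0 : Fin k).val = r₀.val := by rw [h']
      simp [hj0def, hr₀def] at this
      omega)
    exact Finset.disjoint_left.mp hd hx0 (h ▸ hy0)
  have hinf : Infinite (Pt d) :=
    Infinite.of_injective (fun t : ℝ => t • (x0 - y0))
      (smul_left_injective ℝ (sub_ne_zero.mpr hxy))
  -- index sets
  set S := Finset.univ.filter (fun r : Fin k => r.val < i) with hSdef
  set T := Finset.univ.filter (fun r : Fin k => i ≤ r.val) with hTdef
  have hsplit : ∀ f : Fin k → ℝ, ∑ r, f r = ∑ r ∈ S, f r + ∑ r ∈ T, f r := by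
    intro f
    rw [hSdef, hTdef,
      show (Finset.univ.filter (fun r : Fin k => i ≤ r.val)) =
        Finset.univ.filter (fun r : Fin k => ¬ r.val < i) by simp [not_lt]]
    exact (Finset.sum_filter_add_sum_filter_not _ _ _).symm
  have hpd : ∀ (s : Finset (Fin k)) (C : Finset (Pt d)),
      Phi C (s.biUnion Xs) = ∑ j ∈ s, Phi C (Xs j) := by
    intro s C
    unfold Phi
    exact Finset.sum_biUnion (fun j _ l _ hjl => hdisj j l hjl)
  set A := ∑ r ∈ S, Delta1 (Xs r) with hA
  set B := ∑ r ∈ T, Delta1 (Xs r) with hB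
  set V := ∑ r ∈ S, Phi Ci (Xs r) with hV
  set U := ∑ r ∈ T, Phi Ci (Xs r) with hU
  have hA0 : 0 ≤ A := Finset.sum_nonneg fun r _ => delta1_nonneg _
  have hB0 : 0 ≤ B := Finset.sum_nonneg fun r _ => delta1_nonneg _
  have hV0 : 0 ≤ V := Finset.sum_nonneg fun r _ => phi_nonneg _ _
  have hU0 : 0 ≤ U := Finset.sum_nonneg fun r _ => phi_nonneg _ _
  have hj0S : j0 ∈ S := by simp [hSdef, hj0def]; omega
  have hr₀T : r₀ ∈ T := by simp [hTdef, hr₀def]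
  have hCiNe : Ci.Nonempty := ⟨c j0, by rw [hCi_eq]; exact Finset.mem_image_of_mem _ hj0S⟩
  -- the candidate (k-1)-center set
  set D := (Finset.univ.filter (fun r : Fin k => i < r.val)).image (fun r => ctr (Xs r))
    with hD
  set C' := Ci ∪ D with hC'
  have hCiC' : Ci ⊆ C' := Finset.subset_union_left
  have hC'ne : C'.Nonempty := hCiNe.mono hCiC'
  have hScard : S.card ≤ i := by
    have h1 : S.card ≤ (Finset.range i).card :=
      Finset.card_le_card_of_injOn Fin.val
        (fun r hr => Finset.mem_range.mpr (by simpa [hSdef] using hr))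
        (Fin.val_injective.injOn)
    simpa using h1
  have hDcard : D.card ≤ k - (i + 1) := by
    have h1 : (Finset.univ.filter (fun r : Fin k => i < r.val)).card ≤
        (Finset.Ico (i + 1) k).card :=
      Finset.card_le_card_of_injOn Fin.val
        (fun r hr => Finset.mem_Ico.mpr ⟨by simpa using hr, r.isLt⟩)
        (Fin.val_injective.injOn)
    calc D.card ≤ (Finset.univ.filter (fun r : Fin k => i < r.val)).card :=
          Finset.card_image_le
      _ ≤ (Finset.Ico (i + 1) k).card := h1
      _ = k - (i + 1) := by rw [Nat.card_Ico]
  have hC'card : C'.card ≤ k - 1 := by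
    have h1 : C'.card ≤ Ci.card + D.card := Finset.card_union_le _ _
    have h2 : Ci.card ≤ i := by
      rw [hCi_eq]; exact le_trans Finset.card_image_le hScard
    omega
  obtain ⟨C'', hsub'', hcard''⟩ := Infinite.exists_superset_card_eq C' (k - 1) hC'card
  -- bound Δ_{k-1}
  have hkey : DeltaK (k - 1) X ≤ V + (U + B) := by
    have h1 : DeltaK (k - 1) X ≤ Phi C'' X := deltaK_le _ _ _ hcard''
    have h2 : Phi C'' X ≤ Phi C' X := phi_mono hC'ne hsub'' X
    have h3 : Phi C' X = ∑ r ∈ S, Phi C' (Xs r) + ∑ r ∈ T, Phi C' (Xs r) := by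
      rw [← hunion, hpd]; exact hsplit _
    have h4 : ∑ r ∈ S, Phi C' (Xs r) ≤ V :=
      Finset.sum_le_sum fun r _ => phi_mono hCiNe hCiC' _
    have h5 : ∑ r ∈ T, Phi C' (Xs r) ≤ U + B := by
      have e1 : Phi C' (Xs r₀) + ∑ r ∈ T.erase r₀, Phi C' (Xs r) =
          ∑ r ∈ T, Phi C' (Xs r) := Finset.add_sum_erase T (fun r => Phi C' (Xs r)) hr₀T
      have e2 : Phi C' (Xs r₀) ≤ U := by
        refine le_trans (phi_mono hCiNe hCiC' _) ?_
        exact Finset.single_le_sum (fun r _ => phi_nonneg _ _) hr₀T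
      have e3 : ∑ r ∈ T.erase r₀, Phi C' (Xs r) ≤ B := by
        refine le_trans (Finset.sum_le_sum fun r hr => ?_)
          (Finset.sum_le_sum_of_subset_of_nonneg (Finset.erase_subset _ _)
            (fun r _ _ => delta1_nonneg _))
        · have hri : i < r.val := by
            have h6 := Finset.mem_erase.mp hr
            have h7 : i ≤ r.val := by simpa [hTdef] using h6.2
            rcases lt_or_eq_of_le h7 with h | h
            · exact h
            · exact absurd (Fin.ext h.symm : r = r₀) h6.1
          have hctr : ctr (Xs r) ∈ C' := by
            refine Finset.mem_union_right _ ?_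
            exact Finset.mem_image_of_mem _ (by simpa using hri)
          calc Phi C' (Xs r) ≤ Phi {ctr (Xs r)} (Xs r) :=
                phi_mono ⟨_, Finset.mem_singleton_self _⟩
                  (Finset.singleton_subset_iff.mpr hctr) _
            _ = Delta1 (Xs r) := rfl
      linarith
    linarith
  -- irreducibility
  have hirr' : (1 + ε) * (A + B) ≤ DeltaK (k - 1) X := by
    have : DeltaK k X = A + B := by rw [← hsum]; exact hsplit _
    rw [← this]; exact hirr
  -- covered cost is small
  have hVA : V ≤ (1 + ε / 16) * A := by
    rw [hV, hA, Finset.mul_sum]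
    refine Finset.sum_le_sum fun r hr => ?_
    have hri : r.val < i := by simpa [hSdef] using hr
    have hcr : c r ∈ Ci := by rw [hCi_eq]; exact Finset.mem_image_of_mem _ hr
    calc Phi Ci (Xs r) ≤ Phi {c r} (Xs r) :=
          phi_mono ⟨_, Finset.mem_singleton_self _⟩
            (Finset.singleton_subset_iff.mpr hcr) _
      _ ≤ (1 + ε / 16) * Delta1 (Xs r) := hgood r hri
  -- assemble
  have hPhiX : Phi Ci X = V + U := by rw [← hunion, hpd]; exact hsplit _
  have hRHS : Phi Ci (T.biUnion Xs) = U := hpd T Ci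
  rw [hPhiX, hRHS]
  nlinarith [mul_nonneg hε0.le hB0, mul_nonneg hε0.le hA0, mul_nonneg hε0.le hU0,
    mul_nonneg (mul_nonneg hε0.le hε0.le) hA0, sq_nonneg ε]
end
end

section
/- Let 0 < ε ≤ 1/2, let X ⊆ ℝ^d be finite and (k,ε)-irreducible with optimal k-means partition X₁,…,X_k, let 1 ≤ i < k, and let C_i be a set of i centers satisfying the invariant P(i). Then for every j ∈ {i+1,…,k}: (1) Φ(C_i, Y_j) ≥ (ε/128)·Φ(C_i, X_j), and (2) for every y ∈ Y_j and every x ∈ X_j, (ε/128)·Φ(C_i,{y}) ≤ Φ(C_i,{x}). -/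
open Finset
open scoped BigOperators
open Classical

noncomputable section

section Helpers
variable {d : ℕ} {C C' : Finset (Pt d)} {x : Pt d}

noncomputable def ptc (C : Finset (Pt d)) (x : Pt d) : ℝ :=
  sInf ((fun c => ‖x - c‖ ^ 2) '' (C : Set (Pt d)))

lemma Phi_eq (C X : Finset (Pt d)) : Phi C X = ∑ x ∈ X, ptc C x := rfl

lemma Phi_singleton (C : Finset (Pt d)) (x : Pt d) : Phi C {x} = ptc C x :=
  Finset.sum_singleton _ _

lemma ptc_bddBelow (C : Finset (Pt d)) (x : Pt d) :
    BddBelow ((fun c => ‖x - c‖ ^ 2) '' (C : Set (Pt d))) :=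
  ⟨0, by rintro b ⟨c, _, rfl⟩; positivity⟩

lemma ptc_nonneg (C : Finset (Pt d)) (x : Pt d) : 0 ≤ ptc C x := by
  rcases C.eq_empty_or_nonempty with h | h
  · simp [ptc, h, Real.sInf_empty]
  · exact le_csInf (h.to_set.image _) (by rintro b ⟨c, _, rfl⟩; positivity)

lemma ptc_le (hc : c ∈ C) : ptc C x ≤ ‖x - c‖ ^ 2 :=
  csInf_le (ptc_bddBelow C x) ⟨c, by simpa using hc, rfl⟩

lemma exists_ptc (h : C.Nonempty) (x : Pt d) : ∃ c ∈ C, ptc C x = ‖x - c‖ ^ 2 := by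
  have hfin : ((fun c => ‖x - c‖ ^ 2) '' (C : Set (Pt d))).Finite := C.finite_toSet.image _
  have hne : ((fun c => ‖x - c‖ ^ 2) '' (C : Set (Pt d))).Nonempty := h.to_set.image _
  obtain ⟨cc, hcc, heq⟩ := hne.csInf_mem hfin
  exact ⟨cc, by simpa using hcc, heq.symm⟩

lemma Phi_nonneg (C X : Finset (Pt d)) : 0 ≤ Phi C X :=
  Finset.sum_nonneg fun x _ => ptc_nonneg C x

lemma Phi_le_assign (C X : Finset (Pt d)) (g : Pt d → Pt d) (hg : ∀ x ∈ X, g x ∈ C) :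
    Phi C X ≤ ∑ x ∈ X, ‖x - g x‖ ^ 2 :=
  Finset.sum_le_sum fun x hx => ptc_le (hg x hx)

lemma Phi_single (c : Pt d) (X : Finset (Pt d)) : Phi {c} X = ∑ x ∈ X, ‖x - c‖ ^ 2 := by
  simp [Phi, Set.image_singleton]

lemma Phi_le_center {C : Finset (Pt d)} {c : Pt d} (X : Finset (Pt d)) (hc : c ∈ C) :
    Phi C X ≤ Phi {c} X := by
  rw [Phi_single]; exact Phi_le_assign C X (fun _ => c) (fun x _ => hc)

lemma Phi_mono (X : Finset (Pt d)) (hC : C.Nonempty) (hsub : C ⊆ C') :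
    Phi C' X ≤ Phi C X := by
  refine Finset.sum_le_sum fun x _ => ?_
  exact csInf_le_csInf (ptc_bddBelow C' x) (hC.to_set.image _)
    (Set.image_mono (by exact_mod_cast hsub))

lemma sum_center (S : Finset (Pt d)) (hS : S.Nonempty) :
    ∑ x ∈ S, (x - ctr S) = 0 := by
  have hn : ((S.card : ℝ)) ≠ 0 := by
    have := hS.card_pos; positivity
  rw [Finset.sum_sub_distrib, Finset.sum_const, sub_eq_zero, ctr]
  rw [← Nat.cast_smul_eq_nsmul ℝ, smul_inv_smul₀ hn]

lemma Phi_single_eq (S : Finset (Pt d)) (hS : S.Nonempty) (c : Pt d) :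
    Phi {c} S = Delta1 S + (S.card : ℝ) * ‖c - ctr S‖ ^ 2 := by
  have key : ∀ x : Pt d, ‖x - c‖ ^ 2
      = ‖x - ctr S‖ ^ 2 + 2 * (inner ℝ (x - ctr S) (ctr S - c) : ℝ) + ‖ctr S - c‖ ^ 2 := by
    intro x
    have hx : x - c = (x - ctr S) + (ctr S - c) := by abel
    rw [hx, norm_add_sq_real]
  rw [Phi_single, Delta1, Phi_single]
  calc ∑ x ∈ S, ‖x - c‖ ^ 2
      = ∑ x ∈ S, (‖x - ctr S‖ ^ 2 + 2 * (inner ℝ (x - ctr S) (ctr S - c) : ℝ)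
          + ‖ctr S - c‖ ^ 2) := Finset.sum_congr rfl fun x _ => key x
    _ = (∑ x ∈ S, ‖x - ctr S‖ ^ 2) + 2 * (inner ℝ (∑ x ∈ S, (x - ctr S)) (ctr S - c) : ℝ)
          + (S.card : ℝ) * ‖ctr S - c‖ ^ 2 := by
        rw [Finset.sum_add_distrib, Finset.sum_add_distrib, sum_inner, Finset.sum_const,
          nsmul_eq_mul, ← Finset.mul_sum]
    _ = (∑ x ∈ S, ‖x - ctr S‖ ^ 2) + (S.card : ℝ) * ‖c - ctr S‖ ^ 2 := by
        rw [sum_center S hS, inner_zero_left, norm_sub_rev (ctr S) c]; ring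

lemma Delta1_nonneg (S : Finset (Pt d)) : 0 ≤ Delta1 S := Phi_nonneg _ _

lemma Delta1_le (S : Finset (Pt d)) (c : Pt d) : Delta1 S ≤ Phi {c} S := by
  rcases S.eq_empty_or_nonempty with h | h
  · simp [h, Delta1, Phi_single]
  · rw [Phi_single_eq S h c]
    have : 0 ≤ (S.card : ℝ) * ‖c - ctr S‖ ^ 2 := by positivity
    linarith

lemma DeltaK_le_Phi {m : ℕ} (X C : Finset (Pt d)) (h : C.card = m) :
    DeltaK m X ≤ Phi C X :=
  csInf_le ⟨0, by rintro b ⟨C', _, rfl⟩; exact Phi_nonneg _ _⟩ ⟨C, h, rfl⟩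

lemma DeltaK_le_of_card_le [Infinite (Pt d)] {m : ℕ} (X C : Finset (Pt d))
    (hC : C.Nonempty) (h : C.card ≤ m) : DeltaK m X ≤ Phi C X := by
  obtain ⟨C', hsub, hcard⟩ := Infinite.exists_superset_card_eq C m h
  exact (DeltaK_le_Phi X C' hcard).trans (Phi_mono X hC hsub)

lemma le_of_sq_le_sq' {a b : ℝ} (hb : 0 ≤ b) (h : a ^ 2 ≤ b ^ 2) (ha : 0 ≤ a) : a ≤ b := by
  nlinarith

end Helpers

set_option maxHeartbeats 1000000

/-- Under the invariant `P(i)` (clusters reindexed so the covered clusters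
are `X₁, …, X_i`), for every `j ∈ {i+1, …, k}`, with
`Y_j = {y ∈ X_j : Φ(C_i, {y}) ≤ (2/m_j)·Φ(C_i, X_j)}`:
(1) `Φ(C_i, Y_j) ≥ (ε/128)·Φ(C_i, X_j)`, and
(2) for every `y ∈ Y_j` and `x ∈ X_j`, `(ε/128)·Φ(C_i, {y}) ≤ Φ(C_i, {x})`. -/
theorem stmt_11 {d k : ℕ} (ε : ℝ) (hε0 : 0 < ε) (hε : ε ≤ 1 / 2)
    (X : Finset (Pt d)) (hirr : KIrreducible k ε X)
    (Xs : Fin k → Finset (Pt d)) (hopt : IsOptPartition k X Xs)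
    (i : ℕ) (hi : 1 ≤ i) (hik : i < k)
    (c : Fin k → Pt d) (Ci : Finset (Pt d)) (hinv : InvariantP ε X Xs i c Ci) :
    ∀ j : Fin k, i ≤ j.val →
      (ε / 128) * Phi Ci (Xs j) ≤
          Phi Ci ((Xs j).filter
            (fun y => Phi Ci {y} ≤ (2 / ((Xs j).card : ℝ)) * Phi Ci (Xs j))) ∧
      ∀ y ∈ (Xs j).filter
          (fun y => Phi Ci {y} ≤ (2 / ((Xs j).card : ℝ)) * Phi Ci (Xs j)),
        ∀ x ∈ Xs j, (ε / 128) * Phi Ci {y} ≤ Phi Ci {x} := by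
  classical
  obtain ⟨hCi_def, hgood, hpos⟩ := hinv
  obtain ⟨hne, hdisj, hunion, hsum⟩ := hopt
  have hCi_ne : Ci.Nonempty := ⟨c ⟨0, by omega⟩, by
    rw [hCi_def]
    exact Finset.mem_image.2 ⟨⟨0, by omega⟩,
      Finset.mem_filter.2 ⟨Finset.mem_univ _, by simpa using (show 0 < i by omega)⟩, rfl⟩⟩
  haveI hinf : Infinite (Pt d) := by
    have hx : ∃ x ∈ X, 0 < ptc Ci x := by
      by_contra h
      push_neg at h
      have : Phi Ci X ≤ 0 := Finset.sum_nonpos fun x hx => h x hx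
      linarith
    obtain ⟨x, -, hxpos⟩ := hx
    obtain ⟨c0, -, hc0eq⟩ := exists_ptc hCi_ne x
    have hne0 : x - c0 ≠ 0 := by
      intro h0
      rw [hc0eq, h0] at hxpos
      simp at hxpos
    exact Infinite.of_injective (fun t : ℝ => t • (x - c0)) (smul_left_injective ℝ hne0)
  have hΔ1n : ∀ l : Fin k, 0 ≤ Delta1 (Xs l) := fun l => Delta1_nonneg _
  have hΔle : ∀ l : Fin k, Delta1 (Xs l) ≤ DeltaK k X := fun l => by
    rw [← hsum]
    exact Finset.single_le_sum (fun l _ => hΔ1n l) (Finset.mem_univ l)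
  have hΔk0 : 0 ≤ DeltaK k X := by
    rw [← hsum]; exact Finset.sum_nonneg fun l _ => hΔ1n l
  have hPhiPart : ∀ C : Finset (Pt d), Phi C X = ∑ l, Phi C (Xs l) := by
    intro C
    rw [← hunion]
    simp only [Phi]
    exact Finset.sum_biUnion fun a _ b _ hab => hdisj a b hab
  have hcmem : ∀ r : Fin k, r.val < i → c r ∈ Ci := fun r hr => by
    rw [hCi_def]
    exact Finset.mem_image.2 ⟨r, Finset.mem_filter.2 ⟨Finset.mem_univ r, hr⟩, rfl⟩
  have hD : ∀ r : Fin k, r.val < i →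
      (16:ℝ) * ((Xs r).card : ℝ) * ‖c r - ctr (Xs r)‖ ^ 2 ≤ ε * Delta1 (Xs r) := by
    intro r hr
    have h1 := hgood r hr
    rw [Phi_single_eq (Xs r) (hne r) (c r)] at h1
    linarith
  intro j hj
  have hmj : (0:ℝ) < ((Xs j).card : ℝ) := by exact_mod_cast (hne j).card_pos
  obtain ⟨cA, hcA, hcAeq⟩ := exists_ptc hCi_ne (ctr (Xs j))
  -- Fact (A)
  have hA : (15 * ε / 16) * DeltaK k X ≤ ((Xs j).card : ℝ) * ptc Ci (ctr (Xs j)) := by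
    set T := Finset.univ.filter (fun r : Fin k => r.val < i) with hT
    set V := Finset.univ.filter (fun l : Fin k => i ≤ l.val ∧ l ≠ j) with hV
    set C2 := Ci ∪ V.image (fun l => ctr (Xs l)) with hC2
    have hTV : Disjoint T V := by
      rw [Finset.disjoint_left]
      intro a ha hb
      rw [hT, Finset.mem_filter] at ha
      rw [hV, Finset.mem_filter] at hb
      omega
    have hsubTV : T ∪ V ⊆ Finset.univ.erase j := by
      intro a ha
      refine Finset.mem_erase.2 ⟨?_, Finset.mem_univ a⟩
      rcases Finset.mem_union.1 ha with h | h
      · rw [hT, Finset.mem_filter] at h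
        intro haj
        rw [haj] at h
        omega
      · exact ((Finset.mem_filter.1 (hV ▸ h)).2).2
    have hcard2 : C2.card ≤ k - 1 := by
      have h1 : C2.card ≤ T.card + V.card := by
        refine (Finset.card_union_le _ _).trans ?_
        have hA1 : Ci.card ≤ T.card := by rw [hCi_def, hT]; exact Finset.card_image_le
        have hA2 : (V.image (fun l => ctr (Xs l))).card ≤ V.card := Finset.card_image_le
        omega
      have h2 : T.card + V.card ≤ k - 1 := by
        rw [← Finset.card_union_of_disjoint hTV]
        calc (T ∪ V).card ≤ (Finset.univ.erase j).card := Finset.card_le_card hsubTV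
          _ = k - 1 := by
              rw [Finset.card_erase_of_mem (Finset.mem_univ j), Finset.card_univ,
                Fintype.card_fin]
      omega
    have hC2ne : C2.Nonempty := hCi_ne.mono Finset.subset_union_left
    have hle1 : (1 + ε) * DeltaK k X ≤ Phi C2 X :=
      le_trans hirr (DeltaK_le_of_card_le X C2 hC2ne hcard2)
    have hle2 : Phi C2 X ≤ ∑ l, ((1 + ε/16) * Delta1 (Xs l)
        + if l = j then ((Xs j).card : ℝ) * ptc Ci (ctr (Xs j)) else 0) := by
      rw [hPhiPart C2]
      refine Finset.sum_le_sum fun l _ => ?_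
      by_cases hlj : l = j
      · subst hlj
        rw [if_pos rfl]
        have h3 : Phi C2 (Xs l) ≤ Phi {cA} (Xs l) :=
          Phi_le_center _ (Finset.mem_union_left _ hcA)
        rw [Phi_single_eq (Xs l) (hne l) cA] at h3
        have hnorm : ‖cA - ctr (Xs l)‖ ^ 2 = ptc Ci (ctr (Xs l)) := by
          rw [hcAeq, norm_sub_rev]
        rw [hnorm] at h3
        nlinarith [hΔ1n l, hε0.le]
      · rw [if_neg hlj, add_zero]
        by_cases hli : l.val < i
        · have h3 : Phi C2 (Xs l) ≤ Phi {c l} (Xs l) :=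
            Phi_le_center _ (Finset.mem_union_left _ (hcmem l hli))
          exact h3.trans (hgood l hli)
        · have hμmem : ctr (Xs l) ∈ C2 := Finset.mem_union_right _
            (Finset.mem_image.2 ⟨l, Finset.mem_filter.2
              ⟨Finset.mem_univ l, ⟨le_of_not_gt hli, hlj⟩⟩, rfl⟩)
          have h3 : Phi C2 (Xs l) ≤ Delta1 (Xs l) := Phi_le_center _ hμmem
          nlinarith [hΔ1n l, hε0.le]
    have hsum2 : ∑ l, ((1 + ε/16) * Delta1 (Xs l)
        + if l = j then ((Xs j).card : ℝ) * ptc Ci (ctr (Xs j)) else 0)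
        = (1 + ε/16) * DeltaK k X + ((Xs j).card : ℝ) * ptc Ci (ctr (Xs j)) := by
      rw [Finset.sum_add_distrib, ← Finset.mul_sum, hsum, Finset.sum_ite_eq' Finset.univ j,
        if_pos (Finset.mem_univ j)]
    rw [hsum2] at hle2
    nlinarith [hΔk0]
  -- Fact (B)
  have hB : ∀ r : Fin k, r.val < i →
      ε * DeltaK k X ≤ ((Xs r).card : ℝ) * ‖ctr (Xs j) - ctr (Xs r)‖ ^ 2 := by
    intro r hr
    have hjr : j ≠ r := by
      intro h
      rw [h] at hj
      omega
    set C2 := (Finset.univ.erase r).image (fun l => ctr (Xs l)) with hC2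
    have hmem : ∀ l : Fin k, l ≠ r → ctr (Xs l) ∈ C2 := fun l hl =>
      Finset.mem_image.2 ⟨l, Finset.mem_erase.2 ⟨hl, Finset.mem_univ l⟩, rfl⟩
    have hC2ne : C2.Nonempty := ⟨_, hmem j hjr⟩
    have hcard : C2.card ≤ k - 1 := by
      refine Finset.card_image_le.trans ?_
      rw [Finset.card_erase_of_mem (Finset.mem_univ r), Finset.card_univ, Fintype.card_fin]
    have hle1 : (1 + ε) * DeltaK k X ≤ Phi C2 X :=
      le_trans hirr (DeltaK_le_of_card_le X C2 hC2ne hcard)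
    have hle2 : Phi C2 X ≤ ∑ l, (Delta1 (Xs l)
        + if l = r then ((Xs r).card : ℝ) * ‖ctr (Xs j) - ctr (Xs r)‖ ^ 2 else 0) := by
      rw [hPhiPart C2]
      refine Finset.sum_le_sum fun l _ => ?_
      by_cases hlr : l = r
      · subst hlr
        rw [if_pos rfl]
        have h2 : Phi C2 (Xs l) ≤ Phi {ctr (Xs j)} (Xs l) := Phi_le_center _ (hmem j hjr)
        rw [Phi_single_eq (Xs l) (hne l) (ctr (Xs j))] at h2
        exact h2
      · rw [if_neg hlr, add_zero]
        exact Phi_le_center _ (hmem l hlr)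
    have hsum2 : ∑ l, (Delta1 (Xs l)
        + if l = r then ((Xs r).card : ℝ) * ‖ctr (Xs j) - ctr (Xs r)‖ ^ 2 else 0)
        = DeltaK k X + ((Xs r).card : ℝ) * ‖ctr (Xs j) - ctr (Xs r)‖ ^ 2 := by
      rw [Finset.sum_add_distrib, hsum, Finset.sum_ite_eq' Finset.univ r,
        if_pos (Finset.mem_univ r)]
    rw [hsum2] at hle2
    linarith
  -- Fact (C) : swap optimality
  have hCfact : ∀ x ∈ Xs j, ∀ r : Fin k, r.val < i →
      ‖x - ctr (Xs j)‖ ^ 2 ≤ ‖x - ctr (Xs r)‖ ^ 2 := by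
    intro x hx r hr
    set C0 := Finset.univ.image (fun l : Fin k => ctr (Xs l)) with hC0
    have hmem : ∀ l : Fin k, ctr (Xs l) ∈ C0 := fun l =>
      Finset.mem_image.2 ⟨l, Finset.mem_univ l, rfl⟩
    have hC0ne : C0.Nonempty := ⟨_, hmem j⟩
    have hcard : C0.card ≤ k := Finset.card_image_le.trans (by simp)
    have hle1 : DeltaK k X ≤ Phi C0 X := DeltaK_le_of_card_le X C0 hC0ne hcard
    have hle2 : Phi C0 X ≤ ∑ l, (Delta1 (Xs l)
        + if l = j then ‖x - ctr (Xs r)‖ ^ 2 - ‖x - ctr (Xs j)‖ ^ 2 else 0) := by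
      rw [hPhiPart C0]
      refine Finset.sum_le_sum fun l _ => ?_
      by_cases hlj : l = j
      · subst hlj
        rw [if_pos rfl]
        have hassign : Phi C0 (Xs l) ≤
            ∑ y ∈ Xs l, ‖y - (if y = x then ctr (Xs r) else ctr (Xs l))‖ ^ 2 := by
          refine Phi_le_assign _ _ (fun y => if y = x then ctr (Xs r) else ctr (Xs l))
            (fun y _ => ?_)
          by_cases hyx : y = x
          · simp only [hyx, if_pos rfl]; exact hmem r
          · simp only [if_neg hyx]; exact hmem l
        have herase : ∑ y ∈ (Xs l).erase x, ‖y - (if y = x then ctr (Xs r) else ctr (Xs l))‖ ^ 2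
            = ∑ y ∈ (Xs l).erase x, ‖y - ctr (Xs l)‖ ^ 2 :=
          Finset.sum_congr rfl fun y hy => by rw [if_neg (Finset.mem_erase.1 hy).1]
        have hsplit : ∑ y ∈ Xs l, ‖y - (if y = x then ctr (Xs r) else ctr (Xs l))‖ ^ 2
            = Delta1 (Xs l) + (‖x - ctr (Xs r)‖ ^ 2 - ‖x - ctr (Xs l)‖ ^ 2) := by
          rw [Delta1, Phi_single,
            ← Finset.add_sum_erase _ (fun y => ‖y - (if y = x then ctr (Xs r) else ctr (Xs l))‖ ^ 2) hx,
            ← Finset.add_sum_erase _ (fun y => ‖y - ctr (Xs l)‖ ^ 2) hx,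
            herase, if_pos rfl]
          ring
        rw [hsplit] at hassign
        linarith
      · rw [if_neg hlj, add_zero]
        exact Phi_le_center _ (hmem l)
    have hsum2 : ∑ l, (Delta1 (Xs l)
        + if l = j then ‖x - ctr (Xs r)‖ ^ 2 - ‖x - ctr (Xs j)‖ ^ 2 else 0)
        = DeltaK k X + (‖x - ctr (Xs r)‖ ^ 2 - ‖x - ctr (Xs j)‖ ^ 2) := by
      rw [Finset.sum_add_distrib, hsum, Finset.sum_ite_eq' Finset.univ j,
        if_pos (Finset.mem_univ j)]
    rw [hsum2] at hle2
    linarith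
  -- Pointwise bound
  have hP : ∀ x ∈ Xs j, (ε/64) * Phi Ci (Xs j) ≤ ((Xs j).card : ℝ) * ptc Ci x := by
    intro x hx
    obtain ⟨c', hc', hdd⟩ := exists_ptc hCi_ne x
    obtain ⟨r, hrmem, rfl⟩ := Finset.mem_image.1 (hCi_def ▸ hc')
    have hr : r.val < i := (Finset.mem_filter.1 hrmem).2
    have hmr : (0:ℝ) < ((Xs r).card : ℝ) := by exact_mod_cast (hne r).card_pos
    set dd := ‖x - c r‖ with hdd'
    set s := ‖c r - ctr (Xs r)‖ with hs'
    set M := ‖ctr (Xs j) - ctr (Xs r)‖ with hM'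
    have hdd0 : 0 ≤ dd := norm_nonneg _
    have hs0 : 0 ≤ s := norm_nonneg _
    have hM0 : 0 ≤ M := norm_nonneg _
    have h16 : 16 * s ^ 2 ≤ M ^ 2 := by
      have h1 := hD r hr
      have h2 := hB r hr
      have h3 := hΔle r
      have h3b : ε * Delta1 (Xs r) ≤ ε * DeltaK k X :=
        mul_le_mul_of_nonneg_left h3 hε0.le
      have h4 : ((Xs r).card : ℝ) * (16 * s ^ 2) ≤ ((Xs r).card : ℝ) * M ^ 2 := by
        nlinarith
      have h5 := le_of_mul_le_mul_left h4 hmr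
      linarith
    have hsM : 4 * s ≤ M := by
      nlinarith [h16, hs0, hM0, sq_nonneg (M - 4*s), sq_nonneg (M + 4*s)]
    have hxj : ‖x - ctr (Xs j)‖ ≤ dd + s := by
      have h1 : ‖x - ctr (Xs j)‖ ≤ ‖x - ctr (Xs r)‖ :=
        le_of_sq_le_sq' (norm_nonneg _) (hCfact x hx r hr) (norm_nonneg _)
      have h2 : ‖x - ctr (Xs r)‖ ≤ dd + s := by
        calc ‖x - ctr (Xs r)‖ = ‖(x - c r) + (c r - ctr (Xs r))‖ := by rw [sub_add_sub_cancel]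
          _ ≤ dd + s := norm_add_le _ _
      linarith
    have hMdd : M ≤ 4 * dd := by
      have h2 : ‖x - ctr (Xs r)‖ ≤ dd + s := by
        calc ‖x - ctr (Xs r)‖ = ‖(x - c r) + (c r - ctr (Xs r))‖ := by rw [sub_add_sub_cancel]
          _ ≤ dd + s := norm_add_le _ _
      have h1 : M ≤ ‖x - ctr (Xs j)‖ + ‖x - ctr (Xs r)‖ := by
        calc M = ‖(ctr (Xs j) - x) + (x - ctr (Xs r))‖ := by rw [sub_add_sub_cancel]
          _ ≤ ‖ctr (Xs j) - x‖ + ‖x - ctr (Xs r)‖ := norm_add_le _ _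
          _ = ‖x - ctr (Xs j)‖ + ‖x - ctr (Xs r)‖ := by rw [norm_sub_rev]
      linarith
    have hsdd : s ≤ dd := by linarith
    have hxj2 : ‖x - ctr (Xs j)‖ ≤ 2 * dd := by linarith
    have hDsq : ptc Ci (ctr (Xs j)) ≤ 9 * dd ^ 2 := by
      have h1 : ptc Ci (ctr (Xs j)) ≤ ‖ctr (Xs j) - c r‖ ^ 2 := ptc_le (hcmem r hr)
      have h2 : ‖ctr (Xs j) - c r‖ ≤ 3 * dd := by
        calc ‖ctr (Xs j) - c r‖ = ‖(ctr (Xs j) - x) + (x - c r)‖ := by rw [sub_add_sub_cancel]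
          _ ≤ ‖ctr (Xs j) - x‖ + ‖x - c r‖ := norm_add_le _ _
          _ = ‖x - ctr (Xs j)‖ + dd := by rw [norm_sub_rev]
          _ ≤ 3 * dd := by linarith
      nlinarith [norm_nonneg (ctr (Xs j) - c r)]
    have hup : Phi Ci (Xs j) ≤ Delta1 (Xs j) + ((Xs j).card : ℝ) * ptc Ci (ctr (Xs j)) := by
      have h1 : Phi Ci (Xs j) ≤ Phi {cA} (Xs j) := Phi_le_center _ hcA
      rw [Phi_single_eq (Xs j) (hne j) cA] at h1
      rw [hcAeq, norm_sub_rev (ctr (Xs j)) cA]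
      exact h1
    have hA2 : (15 * ε / 16) * DeltaK k X ≤ 9 * ((Xs j).card : ℝ) * dd ^ 2 := by
      nlinarith [hA, hDsq, hmj.le]
    have hΔ1j : ε * Delta1 (Xs j) ≤ (48/5) * (((Xs j).card : ℝ) * dd ^ 2) := by
      have h1 := hΔle j
      nlinarith [hε0.le]
    have h5 : Phi Ci (Xs j) ≤ Delta1 (Xs j) + 9 * (((Xs j).card : ℝ) * dd ^ 2) := by
      nlinarith [hup, hDsq, hmj.le]
    have h6 : (ε/64) * Phi Ci (Xs j)
        ≤ (ε/64) * Delta1 (Xs j) + (9 * ε/64) * (((Xs j).card : ℝ) * dd ^ 2) := by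
      nlinarith [h5, hε0.le]
    have h7 : (ε/64) * Delta1 (Xs j) ≤ (3/20) * (((Xs j).card : ℝ) * dd ^ 2) := by
      linarith
    have h8 : (9 * ε/64) * (((Xs j).card : ℝ) * dd ^ 2)
        ≤ (9/128) * (((Xs j).card : ℝ) * dd ^ 2) := by
      have h9 : 0 ≤ ((Xs j).card : ℝ) * dd ^ 2 := by positivity
      nlinarith
    rw [hdd]
    nlinarith [h6, h7, h8, mul_nonneg hmj.le (sq_nonneg dd)]
  refine ⟨?_, ?_⟩
  · -- Part (1)
    rcases le_or_gt (Phi Ci (Xs j)) 0 with hΦ0 | hΦ0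
    · have h0 : Phi Ci (Xs j) = 0 := le_antisymm hΦ0 (Phi_nonneg _ _)
      rw [h0, mul_zero]
      exact Phi_nonneg _ _
    · set Y := (Xs j).filter
        (fun y => Phi Ci {y} ≤ (2 / ((Xs j).card : ℝ)) * Phi Ci (Xs j)) with hYdef
      set Z := (Xs j).filter
        (fun y => ¬ (Phi Ci {y} ≤ (2 / ((Xs j).card : ℝ)) * Phi Ci (Xs j))) with hZdef
      have hsplit : Y.card + Z.card = (Xs j).card := by
        rw [hYdef, hZdef]
        exact Finset.card_filter_add_card_filter_not _
      have hlower : (Z.card : ℝ) * ((2 / ((Xs j).card : ℝ)) * Phi Ci (Xs j))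
          ≤ ∑ y ∈ Z, ptc Ci y := by
        rw [← nsmul_eq_mul]
        refine Finset.card_nsmul_le_sum _ _ _ fun y hy => ?_
        have h1 := (Finset.mem_filter.1 (hZdef ▸ hy)).2
        rw [Phi_singleton] at h1
        linarith [not_le.1 h1]
      have hZsub : ∑ y ∈ Z, ptc Ci y ≤ Phi Ci (Xs j) := by
        rw [Phi_eq]
        exact Finset.sum_le_sum_of_subset_of_nonneg (hZdef ▸ Finset.filter_subset _ _)
          fun y _ _ => ptc_nonneg _ _
      have hZle : (Z.card : ℝ) * (2 / ((Xs j).card : ℝ)) ≤ 1 := by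
        by_contra hcon
        push_neg at hcon
        nlinarith [hlower.trans hZsub]
      have hcast : (Y.card : ℝ) + (Z.card : ℝ) = ((Xs j).card : ℝ) := by
        exact_mod_cast hsplit
      have hcardY : ((Xs j).card : ℝ) ≤ 2 * (Y.card : ℝ) := by
        have h1 : (Z.card : ℝ) ≤ ((Xs j).card : ℝ) / 2 := by
          rw [div_eq_mul_inv]
          have h2 : (Z.card : ℝ) * 2 ≤ ((Xs j).card : ℝ) := by
            rw [mul_comm (Z.card : ℝ) (2 / ((Xs j).card : ℝ))] at hZle
            rw [div_mul_eq_mul_div, div_le_one hmj] at hZle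
            linarith
          linarith
        linarith
      have hYsub : ∀ y ∈ Y, (ε/64) * Phi Ci (Xs j) / ((Xs j).card : ℝ) ≤ ptc Ci y := by
        intro y hy
        have hyX := (Finset.mem_filter.1 (hYdef ▸ hy)).1
        have h1 := hP y hyX
        rw [div_le_iff₀ hmj]
        linarith
      have hsumY : (Y.card : ℝ) * ((ε/64) * Phi Ci (Xs j) / ((Xs j).card : ℝ))
          ≤ Phi Ci Y := by
        rw [Phi_eq, ← nsmul_eq_mul]
        exact Finset.card_nsmul_le_sum _ _ _ hYsub
      have hb : 0 ≤ (ε/64) * Phi Ci (Xs j) / ((Xs j).card : ℝ) := by positivity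
      have hkey : (ε/128) * Phi Ci (Xs j)
          = (((Xs j).card : ℝ)/2) * ((ε/64) * Phi Ci (Xs j) / ((Xs j).card : ℝ)) := by
        field_simp
        ring
      rw [hkey]
      calc (((Xs j).card : ℝ)/2) * ((ε/64) * Phi Ci (Xs j) / ((Xs j).card : ℝ))
          ≤ (Y.card : ℝ) * ((ε/64) * Phi Ci (Xs j) / ((Xs j).card : ℝ)) := by
            apply mul_le_mul_of_nonneg_right _ hb
            linarith
        _ ≤ Phi Ci Y := hsumY
  · -- Part (2)
    intro y hy x hx
    have hyX := (Finset.mem_filter.1 hy).1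
    have hy2 := (Finset.mem_filter.1 hy).2
    have hPx := hP x hx
    rw [Phi_singleton] at hy2 ⊢
    rw [Phi_singleton]
    rw [← mul_le_mul_iff_right₀ hmj]
    calc ((Xs j).card : ℝ) * (ε / 128 * ptc Ci y)
        ≤ ((Xs j).card : ℝ) * (ε / 128 * ((2 / ((Xs j).card : ℝ)) * Phi Ci (Xs j))) := by
          apply mul_le_mul_of_nonneg_left _ hmj.le
          apply mul_le_mul_of_nonneg_left hy2 (by positivity)
      _ = (ε/64) * Phi Ci (Xs j) := by
          field_simp
          ring
      _ ≤ ((Xs j).card : ℝ) * ptc Ci x := hPx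
end
end
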